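/- arXiv:1012.5744 — 5 statements merged into one kernel-verified Lean document; each statement's English description precedes it below -/
import Mathlib

section
/- For every integer k ≥ 0 and every n ≥ 0, the Hankel-type determinants satisfy H_{k+1}(ΔS_n)·H_k(Δ^m S_{n+1}) = H_k(Δ^{m+1} S_n)·H_{k+1}(S_{n+1}) − H_k(Δ^{m+1} S_{n+1})·H_{k+1}(S_n). -/
/-- Forward difference operator: `(fd u) n = u (n+1) - u n`.
Iterated differences are `fd^[i] u`. -/
def fd (u : ℕ → ℝ) : ℕ → ℝ := fun n => u (n + 1) - u n

/-- Hankel-type determinant `H_k(u_n)` (depending on the fixed integer `m`):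
the determinant of the `k × k` matrix whose `(i,j)` entry is `Δ^{i·m} u_{n+j}`.
By convention `H_k = 0` for `k < 0`, and `H_0 = 1` (empty determinant). -/
noncomputable def Hd (m : ℕ) (u : ℕ → ℝ) (k : ℤ) (n : ℕ) : ℝ :=
  if k < 0 then 0
  else Matrix.det (Matrix.of fun i j : Fin k.toNat => fd^[i.val * m] u (n + j.val))

open Matrix Polynomial

set_option linter.unusedSectionVars false
set_option linter.unusedVariables false
set_option linter.unreachableTactic false
set_option linter.unusedTactic false

section Aux

variable {R : Type*} [CommRing R] {n : Type*} [DecidableEq n] [Fintype n]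

lemma pi_single_eq_one_row (j : n) : Pi.single j (1:R) = (1 : Matrix n n R) j := by
  funext c; simp [Pi.single_apply, Matrix.one_apply, eq_comm]

lemma det_updateRow_sum' (A : Matrix n n R) (j : n) (f : n → (n → R)) :
    ((A.updateRow j (∑ d, f d)).det) = ∑ d, (A.updateRow j (f d)).det := by
  classical
  have H : ∀ s : Finset n, ((A.updateRow j (∑ d ∈ s, f d)).det) = ∑ d ∈ s, (A.updateRow j (f d)).det := by
    intro s
    induction s using Finset.induction_on with
    | empty =>
        rw [Finset.sum_empty, Finset.sum_empty]
        exact Matrix.det_eq_zero_of_row_eq_zero j (fun c => by simp)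
    | insert a s' hk ih =>
        rw [Finset.sum_insert hk, Matrix.det_updateRow_add, ih, Finset.sum_insert hk]
  exact H _

lemma id_det (j1 j2 : n) :
    (((1 : Matrix n n R).updateRow j1 (Pi.single j1 1)).updateRow j2 (Pi.single j2 1)).det = 1 := by
  rw [pi_single_eq_one_row j1, pi_single_eq_one_row j2,
    Matrix.updateRow_eq_self (1 : Matrix n n R) j1, Matrix.updateRow_eq_self, Matrix.det_one]

lemma swap_det (j1 j2 : n) (hj : j1 ≠ j2) :
    (((1 : Matrix n n R).updateRow j1 (Pi.single j2 1)).updateRow j2 (Pi.single j1 1)).det = -1 := by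
  have h : (((1 : Matrix n n R).updateRow j1 (Pi.single j2 1)).updateRow j2 (Pi.single j1 1))
      = (Equiv.swap j1 j2).permMatrix R := by
    ext i j
    rw [Matrix.updateRow_apply, Matrix.updateRow_apply]
    simp only [Equiv.Perm.permMatrix, PEquiv.toMatrix_apply, Equiv.toPEquiv_apply,
      Option.mem_def, Option.some_inj]
    by_cases hij2 : i = j2
    · subst hij2; simp [Equiv.swap_apply_right, Pi.single_apply, eq_comm]
    · by_cases hij1 : i = j1
      · subst hij1; simp [hij2, Equiv.swap_apply_left, Pi.single_apply, eq_comm]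
      · simp [hij2, hij1, Matrix.one_apply, Equiv.swap_apply_of_ne_of_ne hij1 hij2, eq_comm]
  rw [h, Matrix.det_permutation, Equiv.Perm.sign_swap hj]
  simp

lemma base_det (j1 j2 c d : n) (hj : j1 ≠ j2) :
    (((1 : Matrix n n R).updateRow j1 (Pi.single c 1)).updateRow j2 (Pi.single d 1)).det
      = if c = j1 ∧ d = j2 then 1 else if c = j2 ∧ d = j1 then -1 else 0 := by
  classical
  by_cases h1 : c = j1 ∧ d = j2
  · rw [if_pos h1, h1.1, h1.2, id_det]
  · rw [if_neg h1]
    by_cases h2 : c = j2 ∧ d = j1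
    · rw [if_pos h2, h2.1, h2.2, swap_det j1 j2 hj]
    · rw [if_neg h2]
      by_cases hc : c = d
      · refine Matrix.det_zero_of_row_eq hj ?_
        rw [Matrix.updateRow_ne hj, Matrix.updateRow_self, Matrix.updateRow_self, hc]
      · by_cases hc1 : c = j1
        · have hd2 : d ≠ j2 := fun h => h1 ⟨hc1, h⟩
          have hd1 : d ≠ j1 := fun h => hc (hc1.trans h.symm)
          refine Matrix.det_zero_of_row_eq hd2.symm ?_
          rw [Matrix.updateRow_self, Matrix.updateRow_ne hd2, Matrix.updateRow_ne hd1,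
            pi_single_eq_one_row]
        · by_cases hc2 : c = j2
          · have hd1 : d ≠ j1 := fun h => h2 ⟨hc2, h⟩
            have hd2 : d ≠ j2 := fun h => hc (hc2.trans h.symm)
            refine Matrix.det_zero_of_row_eq hd2.symm ?_
            rw [Matrix.updateRow_self, Matrix.updateRow_ne hd2, Matrix.updateRow_ne hd1,
              pi_single_eq_one_row]
          · refine Matrix.det_zero_of_row_eq hc1 ?_
            rw [Matrix.updateRow_ne hc2, Matrix.updateRow_ne hc1, Matrix.updateRow_ne hj,
              Matrix.updateRow_self, pi_single_eq_one_row]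

lemma detD (j1 j2 : n) (hj : j1 ≠ j2) (v w : n → R) :
    (((1 : Matrix n n R).updateRow j1 v).updateRow j2 w).det
      = v j1 * w j2 - v j2 * w j1 := by
  classical
  have hv : v = ∑ c, (v c) • (Pi.single c 1 : n → R) := by
    funext x; simp [Pi.single_apply, Finset.sum_ite_eq', mul_ite]
  have hw : w = ∑ d, (w d) • (Pi.single d 1 : n → R) := by
    funext x; simp [Pi.single_apply, Finset.sum_ite_eq', mul_ite]
  calc (((1 : Matrix n n R).updateRow j1 v).updateRow j2 w).det
      = ∑ d, (w d) * (((1 : Matrix n n R).updateRow j1 v).updateRow j2 (Pi.single d 1)).det := by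
        conv_lhs => rw [hw]
        rw [det_updateRow_sum' _ _ (fun d => (w d) • (Pi.single d 1 : n → R))]
        exact Finset.sum_congr rfl fun d _ => Matrix.det_updateRow_smul _ _ _ _
    _ = ∑ d, (w d) * ∑ c, (v c) * ((((1 : Matrix n n R).updateRow j1 (Pi.single c 1)).updateRow j2 (Pi.single d 1)).det) := by
        refine Finset.sum_congr rfl fun d _ => ?_
        congr 1
        have comm : ∀ u : n → R, (((1 : Matrix n n R).updateRow j1 u).updateRow j2 (Pi.single d 1))
            = (((1 : Matrix n n R).updateRow j2 (Pi.single d 1)).updateRow j1 u) := by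
          intro u; ext i j
          rw [Matrix.updateRow_apply, Matrix.updateRow_apply, Matrix.updateRow_apply,
            Matrix.updateRow_apply]
          by_cases hi2 : i = j2 <;> by_cases hi1 : i = j1 <;> simp_all [hj]
        rw [comm v]
        conv_lhs => rw [hv]
        rw [det_updateRow_sum' _ _ (fun c => (v c) • (Pi.single c 1 : n → R))]
        refine Finset.sum_congr rfl fun c _ => ?_
        rw [Matrix.det_updateRow_smul, comm (Pi.single c 1)]
    _ = v j1 * w j2 - v j2 * w j1 := by
        clear hv hw
        have key : ∀ d, (∑ c, (v c) * ((((1 : Matrix n n R).updateRow j1 (Pi.single c 1)).updateRow j2 (Pi.single d 1)).det))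
            = v j1 * (if d = j2 then 1 else 0) + v j2 * (if d = j1 then -1 else 0) := by
          intro d
          have hterm : ∀ c, (v c) * ((((1 : Matrix n n R).updateRow j1 (Pi.single c 1)).updateRow j2 (Pi.single d 1)).det)
              = (if c = j1 then v j1 * (if d = j2 then 1 else 0) else 0)
                + (if c = j2 then v j2 * (if d = j1 then -1 else 0) else 0) := by
            intro c
            rw [base_det j1 j2 c d hj]
            by_cases h1 : c = j1 <;> by_cases h2 : c = j2 <;> by_cases h3 : d = j1 <;>
              by_cases h4 : d = j2 <;> simp_all [hj]
          rw [Finset.sum_congr rfl (fun c _ => hterm c), Finset.sum_add_distrib,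
            Finset.sum_ite_eq' Finset.univ j1, Finset.sum_ite_eq' Finset.univ j2]
          simp
        rw [Finset.sum_congr rfl (fun d _ => by rw [key d])]
        have hterm2 : ∀ d, (w d) * (v j1 * (if d = j2 then 1 else 0) + v j2 * (if d = j1 then -1 else 0))
            = (if d = j2 then w j2 * v j1 else 0) + (if d = j1 then w j1 * (- v j2) else 0) := by
          intro d
          by_cases h3 : d = j1 <;> by_cases h4 : d = j2 <;> simp_all [hj] <;> ring
        rw [Finset.sum_congr rfl (fun d _ => hterm2 d), Finset.sum_add_distrib,
          Finset.sum_ite_eq' Finset.univ j2, Finset.sum_ite_eq' Finset.univ j1]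
        simp only [Finset.mem_univ, if_true]
        ring

lemma jacobiU (A : Matrix n n R) (i1 i2 j1 j2 : n) (hj : j1 ≠ j2) :
    det A * ((A.updateRow j1 (Pi.single i1 1)).det * (A.updateRow j2 (Pi.single i2 1)).det
        - (A.updateRow j1 (Pi.single i2 1)).det * (A.updateRow j2 (Pi.single i1 1)).det)
      = det A * (det A * ((A.updateRow j1 (Pi.single i1 1)).updateRow j2 (Pi.single i2 1)).det) := by
  classical
  set B := adjugate A with hB
  set D := (((1 : Matrix n n R).updateRow j1 (B i1)).updateRow j2 (B i2)) with hD
  have hDA : D * A = (A.updateRow j1 (det A • (Pi.single i1 1 : n → R))).updateRow j2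
      (det A • (Pi.single i2 1 : n → R)) := by
    ext p q
    rw [Matrix.mul_apply]
    by_cases hp2 : p = j2
    · subst hp2
      rw [Matrix.updateRow_self, hD, Matrix.updateRow_self]
      have : ∑ r, B i2 r * A r q = (B * A) i2 q := by rw [Matrix.mul_apply]
      rw [this, hB, Matrix.adjugate_mul]
      simp [Matrix.smul_apply, Matrix.one_apply, Pi.single_apply, eq_comm]
    · rw [Matrix.updateRow_ne hp2]
      by_cases hp1 : p = j1
      · subst hp1
        rw [Matrix.updateRow_self, hD, Matrix.updateRow_ne hj, Matrix.updateRow_self]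
        have : ∑ r, B i1 r * A r q = (B * A) i1 q := by rw [Matrix.mul_apply]
        rw [this, hB, Matrix.adjugate_mul]
        simp [Matrix.smul_apply, Matrix.one_apply, Pi.single_apply, eq_comm]
      · rw [Matrix.updateRow_ne hp1, hD, Matrix.updateRow_ne hp2, Matrix.updateRow_ne hp1]
        have : ∑ r, (1 : Matrix n n R) p r * A r q = ((1 : Matrix n n R) * A) p q := by
          rw [Matrix.mul_apply]
        rw [this, Matrix.one_mul]
  have hdet2 : det (D * A) = det A * (det A * ((A.updateRow j1 (Pi.single i1 1)).updateRow j2 (Pi.single i2 1)).det) := by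
    rw [hDA, Matrix.det_updateRow_smul]
    have comm : ((A.updateRow j1 (det A • (Pi.single i1 1 : n → R))).updateRow j2 (Pi.single i2 1))
        = ((A.updateRow j2 (Pi.single i2 1)).updateRow j1 (det A • (Pi.single i1 1 : n → R))) := by
      ext p q
      rw [Matrix.updateRow_apply, Matrix.updateRow_apply, Matrix.updateRow_apply,
        Matrix.updateRow_apply]
      by_cases hp2 : p = j2 <;> by_cases hp1 : p = j1 <;> simp_all [hj]
    rw [comm, Matrix.det_updateRow_smul]
    have comm2 : ((A.updateRow j2 (Pi.single i2 1)).updateRow j1 (Pi.single i1 1))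
        = ((A.updateRow j1 (Pi.single i1 1)).updateRow j2 (Pi.single i2 1)) := by
      ext p q
      rw [Matrix.updateRow_apply, Matrix.updateRow_apply, Matrix.updateRow_apply,
        Matrix.updateRow_apply]
      by_cases hp2 : p = j2 <;> by_cases hp1 : p = j1 <;> simp_all [hj]
    rw [comm2]
  have hdetD : det D = (A.updateRow j1 (Pi.single i1 1)).det * (A.updateRow j2 (Pi.single i2 1)).det
      - (A.updateRow j1 (Pi.single i2 1)).det * (A.updateRow j2 (Pi.single i1 1)).det := by
    rw [hD, detD j1 j2 hj]
    rw [hB, Matrix.adjugate_apply, Matrix.adjugate_apply, Matrix.adjugate_apply,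
      Matrix.adjugate_apply]
    ring
  calc det A * ((A.updateRow j1 (Pi.single i1 1)).det * (A.updateRow j2 (Pi.single i2 1)).det
        - (A.updateRow j1 (Pi.single i2 1)).det * (A.updateRow j2 (Pi.single i1 1)).det)
      = det A * det D := by rw [hdetD]
    _ = det D * det A := by ring
    _ = det (D * A) := (Matrix.det_mul _ _).symm
    _ = _ := hdet2

lemma jacobiR {N : ℕ} (A : Matrix (Fin N) (Fin N) ℝ) (i1 i2 j1 j2 : Fin N) (hj : j1 ≠ j2) :
    (A.updateRow j1 (Pi.single i1 1)).det * (A.updateRow j2 (Pi.single i2 1)).det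
        - (A.updateRow j1 (Pi.single i2 1)).det * (A.updateRow j2 (Pi.single i1 1)).det
      = det A * ((A.updateRow j1 (Pi.single i1 1)).updateRow j2 (Pi.single i2 1)).det := by
  classical
  -- lift to ℝ[X]
  set A' : Matrix (Fin N) (Fin N) (Polynomial ℝ) := (X : ℝ[X]) • (1 : Matrix (Fin N) (Fin N) ℝ[X]) + A.map C with hA'
  have hch : A' = charmatrix (-A) := by
    rw [hA', charmatrix]
    ext i j
    by_cases h : i = j <;>
      simp [Matrix.map_apply, Matrix.one_apply, Matrix.diagonal_apply, h, sub_neg_eq_add]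
  have hne : det A' ≠ 0 := by
    rw [hch]
    exact (Matrix.charpoly_monic (-A)).ne_zero
  have key := jacobiU A' i1 i2 j1 j2 hj
  have cancel := mul_left_cancel₀ hne key
  -- evaluate at 0
  have hev : ∀ M : Matrix (Fin N) (Fin N) ℝ[X], (Polynomial.evalRingHom (0:ℝ)) M.det = (M.map (Polynomial.evalRingHom (0:ℝ))).det :=
    fun M => RingHom.map_det _ M
  have hmapA : A'.map (Polynomial.evalRingHom (0:ℝ)) = A := by
    ext i j
    simp [hA', Matrix.map_apply, Matrix.one_apply, Matrix.smul_apply, apply_ite]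
  have hsingle : ∀ i : Fin N, (⇑(Polynomial.evalRingHom (0:ℝ)) ∘ (Pi.single i (1:ℝ[X]) : Fin N → ℝ[X])) = Pi.single i (1:ℝ) := by
    intro i; funext q; simp [Pi.single_apply, apply_ite]
  have hupd : ∀ (i j : Fin N), (A'.updateRow j (Pi.single i 1)).map (Polynomial.evalRingHom (0:ℝ))
      = A.updateRow j (Pi.single i 1) := by
    intro i j
    rw [Matrix.map_updateRow, hmapA, hsingle]
  have hupd2 : ((A'.updateRow j1 (Pi.single i1 1)).updateRow j2 (Pi.single i2 1)).map (Polynomial.evalRingHom (0:ℝ))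
      = (A.updateRow j1 (Pi.single i1 1)).updateRow j2 (Pi.single i2 1) := by
    rw [Matrix.map_updateRow, hupd, hsingle]
  have := congrArg (Polynomial.evalRingHom (0:ℝ)) cancel
  simp only [map_sub, _root_.map_mul, hev, hupd, hupd2, hmapA] at this
  exact this

lemma cof {N : ℕ} (A : Matrix (Fin (N+1)) (Fin (N+1)) ℝ) (r c : Fin (N+1)) :
    det (A.updateRow r (Pi.single c 1))
      = (-1)^((r:ℕ)+(c:ℕ)) * det (A.submatrix r.succAbove c.succAbove) := by
  rw [Matrix.det_succ_row _ r]
  rw [Finset.sum_eq_single c]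
  · rw [Matrix.updateRow_self, Matrix.submatrix_updateRow_succAbove]
    simp
  · intro j _ hj
    rw [Matrix.updateRow_self, Pi.single_eq_of_ne hj]
    ring
  · intro h; exact absurd (Finset.mem_univ c) h

lemma tel {N : ℕ} (A : Matrix (Fin (N+1)) (Fin (N+1)) ℝ) (h0 : ∀ p, A p 0 = 1) :
    det A = det (Matrix.of fun p q : Fin N => A p.succ q.succ - A p.castSucc q.succ) := by
  set B : Matrix (Fin (N+1)) (Fin (N+1)) ℝ :=
    Matrix.of (fun p q => Fin.cases (motive := fun _ => ℝ) (A 0 q)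
      (fun p' => A p'.succ q - A p'.castSucc q) p) with hB
  have hAB : det A = det B := by
    refine Matrix.det_eq_of_forall_row_eq_smul_add_pred (fun _ => (1:ℝ)) (fun j => ?_) (fun i j => ?_)
    · simp [hB]
    · simp [hB]
  rw [hAB, Matrix.det_succ_column_zero, Finset.sum_eq_single 0]
  · have h00 : B 0 0 = 1 := by simp [hB, h0]
    have : B.submatrix (0 : Fin (N+1)).succAbove Fin.succ
        = Matrix.of fun p q : Fin N => A p.succ q.succ - A p.castSucc q.succ := by
      ext p q
      simp [hB, Fin.succAbove_zero]
    rw [h00, this]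
    simp
  · intro i _ hi
    obtain ⟨i', rfl⟩ := Fin.eq_succ_of_ne_zero hi
    have : B i'.succ 0 = 0 := by simp [hB, h0]
    rw [this]
    ring
  · intro h; exact absurd (Finset.mem_univ _) h

lemma sa1_val {k : ℕ} (q : Fin (k+1)) :
    (((1 : Fin (k+2)).succAbove q : Fin (k+2)) : ℕ) = if (q:ℕ) = 0 then 0 else (q:ℕ)+1 := by
  by_cases h : (q:ℕ) = 0
  · have hlt : Fin.castSucc q < (1 : Fin (k+2)) := by
      rw [Fin.lt_def]; simp [h]
    rw [Fin.succAbove, if_pos hlt]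
    simp [h]
  · have hlt : ¬ Fin.castSucc q < (1 : Fin (k+2)) := by
      rw [Fin.lt_def]; simp; exact fun hq => h (by simp [hq])
    rw [Fin.succAbove, if_neg hlt]
    simp [h, Fin.val_succ]

lemma lemL (u : ℕ → ℕ → ℝ) (k : ℕ) :
    det (Matrix.of fun j i : Fin (k+1) => u (↑j+1) ↑i - u ↑j ↑i)
      * det (Matrix.of fun j i : Fin k => u (↑j+1) (↑i+1))
    = det (Matrix.of fun j i : Fin k => u (↑j+1) (↑i+1) - u ↑j (↑i+1))
        * det (Matrix.of fun j i : Fin (k+1) => u (↑j+1) ↑i)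
      - det (Matrix.of fun j i : Fin k => u (↑j+2) (↑i+1) - u (↑j+1) (↑i+1))
        * det (Matrix.of fun j i : Fin (k+1) => u ↑j ↑i) := by
  set M : Matrix (Fin (k+2)) (Fin (k+2)) ℝ :=
    Matrix.of (fun j i => if (i:ℕ) = 0 then (1:ℝ) else u ↑j ((i:ℕ)-1)) with hM
  have h0last : (0 : Fin (k+2)) ≠ Fin.last (k+1) := by
    simp [Fin.ext_iff]
  have hjac := jacobiR M 0 1 0 (Fin.last (k+1)) h0last
  -- Piece P1 : delete row 0 (vector v_0) and ones column
  have hP1 : det (M.updateRow 0 (Pi.single 0 1))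
      = det (Matrix.of fun p q : Fin (k+1) => u (↑p+1) ↑q) := by
    rw [cof M 0 0]
    have : M.submatrix (0 : Fin (k+2)).succAbove (0 : Fin (k+2)).succAbove
        = Matrix.of fun p q : Fin (k+1) => u (↑p+1) ↑q := by
      ext p q
      simp [hM, Fin.succAbove_zero, Fin.val_succ]
    rw [this]
    norm_num
  -- Piece P2 : delete last row and coordinate-0 column
  have hP2 : det (M.updateRow (Fin.last (k+1)) (Pi.single 1 1))
      = (-1)^(k+2) * det (Matrix.of fun p q : Fin k => u (↑p+1) (↑q+1) - u ↑p (↑q+1)) := by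
    rw [cof M (Fin.last (k+1)) 1]
    have hones : ∀ p, (M.submatrix (Fin.last (k+1)).succAbove (1 : Fin (k+2)).succAbove) p 0 = 1 := by
      intro p
      simp [hM, Fin.succAbove_last, sa1_val]
    rw [tel _ hones]
    have : (Matrix.of fun p q : Fin k =>
          (M.submatrix (Fin.last (k+1)).succAbove (1 : Fin (k+2)).succAbove) p.succ q.succ
          - (M.submatrix (Fin.last (k+1)).succAbove (1 : Fin (k+2)).succAbove) p.castSucc q.succ)
        = Matrix.of fun p q : Fin k => u (↑p+1) (↑q+1) - u ↑p (↑q+1) := by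
      ext p q
      simp [hM, Fin.succAbove_last, sa1_val, Fin.val_succ]
    rw [this, Fin.val_last, Fin.val_one]
  -- Piece P3 : delete row 0 and coordinate-0 column
  have hP3 : det (M.updateRow 0 (Pi.single 1 1))
      = (-1) * det (Matrix.of fun p q : Fin k => u (↑p+2) (↑q+1) - u (↑p+1) (↑q+1)) := by
    rw [cof M 0 1]
    have hones : ∀ p, (M.submatrix (0 : Fin (k+2)).succAbove (1 : Fin (k+2)).succAbove) p 0 = 1 := by
      intro p
      simp [hM, Fin.succAbove_zero, sa1_val]
    rw [tel _ hones]
    have : (Matrix.of fun p q : Fin k =>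
          (M.submatrix (0 : Fin (k+2)).succAbove (1 : Fin (k+2)).succAbove) p.succ q.succ
          - (M.submatrix (0 : Fin (k+2)).succAbove (1 : Fin (k+2)).succAbove) p.castSucc q.succ)
        = Matrix.of fun p q : Fin k => u (↑p+2) (↑q+1) - u (↑p+1) (↑q+1) := by
      ext p q
      simp [hM, Fin.succAbove_zero, sa1_val, Fin.val_succ]
    rw [this, Fin.val_zero, Fin.val_one]
    norm_num
  -- Piece P4 : delete last row and ones column
  have hP4 : det (M.updateRow (Fin.last (k+1)) (Pi.single 0 1))
      = (-1)^(k+1) * det (Matrix.of fun p q : Fin (k+1) => u ↑p ↑q) := by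
    rw [cof M (Fin.last (k+1)) 0]
    have : M.submatrix (Fin.last (k+1)).succAbove (0 : Fin (k+2)).succAbove
        = Matrix.of fun p q : Fin (k+1) => u ↑p ↑q := by
      ext p q
      simp [hM, Fin.succAbove_last, Fin.succAbove_zero, Fin.val_succ]
    rw [this, Fin.val_last, Fin.val_zero]
  -- det M
  have hdM : det M = det (Matrix.of fun p q : Fin (k+1) => u (↑p+1) ↑q - u ↑p ↑q) := by
    have hones : ∀ p, M p 0 = 1 := fun p => by simp [hM]
    rw [tel M hones]
    congr 1
  -- interior X
  have hX : ((M.updateRow 0 (Pi.single 0 1)).updateRow (Fin.last (k+1)) (Pi.single 1 1)).det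
      = (-1)^(k+2) * det (Matrix.of fun p q : Fin k => u (↑p+1) (↑q+1)) := by
    rw [cof _ (Fin.last (k+1)) 1]
    have hcomm : (M.updateRow 0 (Pi.single 0 1)).submatrix (Fin.last (k+1)).succAbove
          (1 : Fin (k+2)).succAbove
        = (M.submatrix (Fin.last (k+1)).succAbove (1 : Fin (k+2)).succAbove).updateRow 0
            (Pi.single 0 1) := by
      ext p q
      rw [Matrix.submatrix_apply, Matrix.updateRow_apply, Matrix.updateRow_apply]
      by_cases hp : p = 0
      · subst hp
        rw [Fin.succAbove_last]
        simp only [Fin.castSucc_zero, if_pos rfl]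
        have h1 : (Pi.single (0 : Fin (k+2)) (1:ℝ) : Fin (k+2) → ℝ) ((1 : Fin (k+2)).succAbove q)
            = if ((1 : Fin (k+2)).succAbove q : ℕ) = 0 then 1 else 0 := by
          rw [Pi.single_apply]
          congr 1
          simp only [Fin.ext_iff, Fin.val_zero]
        have h2 : (Pi.single (0 : Fin (k+1)) (1:ℝ) : Fin (k+1) → ℝ) q = if (q:ℕ) = 0 then 1 else 0 := by
          rw [Pi.single_apply]
          congr 1
          simp only [Fin.ext_iff, Fin.val_zero]
        rw [h1, h2, sa1_val]
        by_cases hq : (q:ℕ) = 0 <;> simp [hq]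
      · have hp' : Fin.castSucc p ≠ 0 := by
          simpa using hp
        rw [Fin.succAbove_last, if_neg hp', if_neg hp]
        rfl
    rw [hcomm, cof _ 0 0]
    have : (M.submatrix (Fin.last (k+1)).succAbove (1 : Fin (k+2)).succAbove).submatrix
          (0 : Fin (k+1)).succAbove (0 : Fin (k+1)).succAbove
        = Matrix.of fun p q : Fin k => u (↑p+1) (↑q+1) := by
      ext p q
      simp [hM, Fin.succAbove_last, Fin.succAbove_zero, sa1_val, Fin.val_succ]
    rw [this, Fin.val_last, Fin.val_one, Fin.val_zero]
    norm_num
  rw [hP1, hP2, hP3, hP4, hdM, hX] at hjac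
  refine mul_left_cancel₀ (pow_ne_zero k (by norm_num : (-1:ℝ) ≠ 0)) ?_
  linear_combination -hjac

lemma Hd_nat (m : ℕ) (u : ℕ → ℝ) (K n : ℕ) :
    Hd m u (K : ℤ) n = det (Matrix.of fun i j : Fin K => fd^[i.val * m] u (n + j.val)) := by
  rw [Hd, if_neg (by omega : ¬ ((K:ℤ) < 0))]
  rfl

lemma Hd_nat' (m : ℕ) (u : ℕ → ℝ) (K n : ℕ) :
    Hd m u ((K : ℤ) + 1) n = det (Matrix.of fun i j : Fin (K+1) => fd^[i.val * m] u (n + j.val)) := by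
  have : ((K : ℤ) + 1) = ((K + 1 : ℕ) : ℤ) := by push_cast; ring
  rw [this, Hd_nat]

lemma key2 (a b : ℕ) (S : ℕ → ℝ) (x : ℕ) : fd^[a] (fd^[b] S) x = fd^[a+b] S x := by
  rw [Function.iterate_add_apply fd a b S]

lemma key3 (a : ℕ) (S : ℕ → ℝ) (x : ℕ) : fd^[a+1] S x = fd^[a] S (x+1) - fd^[a] S x := by
  rw [Function.iterate_succ_apply' fd a S]
  rfl

end Aux

/-- Lemma 1: `H_{k+1}(ΔS_n) H_k(Δ^m S_{n+1}) = H_k(Δ^{m+1}S_n) H_{k+1}(S_{n+1})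
− H_k(Δ^{m+1}S_{n+1}) H_{k+1}(S_n)` for all `k, n ≥ 0`. -/
theorem stmt_0 (m : ℕ) (hm : 1 ≤ m) (S : ℕ → ℝ) (k n : ℕ) :
    Hd m (fd^[1] S) ((k : ℤ) + 1) n * Hd m (fd^[m] S) (k : ℤ) (n + 1) =
      Hd m (fd^[m + 1] S) (k : ℤ) n * Hd m S ((k : ℤ) + 1) (n + 1) -
        Hd m (fd^[m + 1] S) (k : ℤ) (n + 1) * Hd m S ((k : ℤ) + 1) n := by
  have h1 : Hd m (fd^[1] S) ((k : ℤ) + 1) n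
      = det (Matrix.of fun j i : Fin (k+1) =>
          fd^[↑i*m] S (n+(↑j+1)) - fd^[↑i*m] S (n+↑j)) := by
    rw [Hd_nat', ← Matrix.det_transpose]
    congr 1
    ext j i
    simp only [Matrix.transpose_apply, Matrix.of_apply]
    rw [key2, key3, Nat.add_assoc]
  have h2 : Hd m (fd^[m] S) (k : ℤ) (n+1)
      = det (Matrix.of fun j i : Fin k => fd^[(↑i+1)*m] S (n+(↑j+1))) := by
    rw [Hd_nat, ← Matrix.det_transpose]
    congr 1
    ext j i
    simp only [Matrix.transpose_apply, Matrix.of_apply]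
    rw [key2, show (i:ℕ)*m + m = ((i:ℕ)+1)*m by ring, show n+1+(j:ℕ) = n+((j:ℕ)+1) by omega]
  have h3 : Hd m (fd^[m+1] S) (k : ℤ) n
      = det (Matrix.of fun j i : Fin k =>
          fd^[(↑i+1)*m] S (n+(↑j+1)) - fd^[(↑i+1)*m] S (n+↑j)) := by
    rw [Hd_nat, ← Matrix.det_transpose]
    congr 1
    ext j i
    simp only [Matrix.transpose_apply, Matrix.of_apply]
    rw [key2, show (i:ℕ)*m + (m+1) = ((i:ℕ)*m+m)+1 by ring, key3,
      show (i:ℕ)*m + m = ((i:ℕ)+1)*m by ring, Nat.add_assoc]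
  have h4 : Hd m S ((k : ℤ) + 1) (n+1)
      = det (Matrix.of fun j i : Fin (k+1) => fd^[↑i*m] S (n+(↑j+1))) := by
    rw [Hd_nat', ← Matrix.det_transpose]
    congr 1
    ext j i
    simp only [Matrix.transpose_apply, Matrix.of_apply]
    rw [show n+1+(j:ℕ) = n+((j:ℕ)+1) by omega]
  have h5 : Hd m (fd^[m+1] S) (k : ℤ) (n+1)
      = det (Matrix.of fun j i : Fin k =>
          fd^[(↑i+1)*m] S (n+(↑j+2)) - fd^[(↑i+1)*m] S (n+(↑j+1))) := by
    rw [Hd_nat, ← Matrix.det_transpose]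
    congr 1
    ext j i
    simp only [Matrix.transpose_apply, Matrix.of_apply]
    rw [key2, show (i:ℕ)*m + (m+1) = ((i:ℕ)*m+m)+1 by ring, key3,
      show (i:ℕ)*m + m = ((i:ℕ)+1)*m by ring,
      show n+1+(j:ℕ) = n+((j:ℕ)+1) by omega,
      show n+((j:ℕ)+1)+1 = n+((j:ℕ)+2) by omega]
  have h6 : Hd m S ((k : ℤ) + 1) n
      = det (Matrix.of fun j i : Fin (k+1) => fd^[↑i*m] S (n+↑j)) := by
    rw [Hd_nat', ← Matrix.det_transpose]
    congr 1
  have main := lemL (fun a b => fd^[b*m] S (n+a)) k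
  rw [h1, h2, h3, h4, h5, h6]
  exact main
end

section
/- For all integers i ≥ 0, k ≥ 0 and n ≥ 0, H_{k+1}(Δ^{i+1} S_n)·H_k(Δ^{i+m} S_{n+1}) = H_k(Δ^{i+m+1} S_n)·H_{k+1}(Δ^i S_{n+1}) − H_k(Δ^{i+m+1} S_{n+1})·H_{k+1}(Δ^i S_n). -/
open Matrix

namespace HAux

/-- value of succAbove -/
lemma succAbove_val {N : ℕ} (p : Fin (N+1)) (j : Fin N) :
    ((p.succAbove j : Fin (N+1)) : ℕ) = if (j:ℕ) < (p:ℕ) then (j:ℕ) else (j:ℕ)+1 := by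
  rcases lt_or_ge ((j:ℕ)) ((p:ℕ)) with h | h
  · rw [Fin.succAbove_of_castSucc_lt _ _ (by simpa [Fin.lt_def] using h)]
    simp [h]
  · rw [Fin.succAbove_of_le_castSucc _ _ (by simpa [Fin.le_def] using h)]
    simp [if_neg (not_lt.mpr h)]

/-- sum of basis vectors is the all-ones vector -/
lemma sum_single {N : ℕ} : (∑ b : Fin N, Pi.single b (1:ℝ)) = fun _ => (1:ℝ) := by
  funext c
  rw [Finset.sum_apply]
  simp [Pi.single_apply]

variable {k : ℕ}

noncomputable def Fd (Rh : Fin k → Fin (k+2) → ℝ) (a b : Fin (k+2) → ℝ) : ℝ :=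
  Matrix.det (Matrix.of (Fin.cons a (Fin.cons b Rh)))

lemma Fd_eq_update_right (Rh : Fin k → Fin (k+2) → ℝ) (a b : Fin (k+2) → ℝ) :
    Fd Rh a b = ((Matrix.of (Fin.cons a (Fin.cons 0 Rh))).updateRow 1 b).det := by
  unfold Fd
  congr 1
  funext i j
  rw [Matrix.updateRow_apply]
  refine Fin.cases ?_ (fun i' => ?_) i
  · have : (0 : Fin (k+2)) ≠ 1 := by simp [Fin.ext_iff]
    simp [this]
  · refine Fin.cases ?_ (fun i'' => ?_) i'
    · simp [Fin.succ_zero_eq_one]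
    · have : (Fin.succ (Fin.succ i'') : Fin (k+2)) ≠ 1 := by
        simp [Fin.ext_iff]
      simp [this]

lemma Fd_eq_update_left (Rh : Fin k → Fin (k+2) → ℝ) (a b : Fin (k+2) → ℝ) :
    Fd Rh a b = ((Matrix.of (Fin.cons 0 (Fin.cons b Rh))).updateRow 0 a).det := by
  unfold Fd
  congr 1
  funext i j
  rw [Matrix.updateRow_apply]
  refine Fin.cases ?_ (fun i' => ?_) i
  · simp
  · have : (Fin.succ i' : Fin (k+2)) ≠ 0 := Fin.succ_ne_zero i'
    simp [this]

lemma Fd_add_right (Rh : Fin k → Fin (k+2) → ℝ) (a u v : Fin (k+2) → ℝ) :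
    Fd Rh a (u + v) = Fd Rh a u + Fd Rh a v := by
  simp [Fd_eq_update_right, Matrix.det_updateRow_add]

lemma Fd_smul_right (Rh : Fin k → Fin (k+2) → ℝ) (a : Fin (k+2) → ℝ) (c : ℝ) (u : Fin (k+2) → ℝ) :
    Fd Rh a (c • u) = c * Fd Rh a u := by
  simp [Fd_eq_update_right, Matrix.det_updateRow_smul]

lemma Fd_zero_right (Rh : Fin k → Fin (k+2) → ℝ) (a : Fin (k+2) → ℝ) :
    Fd Rh a 0 = 0 := by
  rw [Fd_eq_update_right]
  apply Matrix.det_eq_zero_of_row_eq_zero 1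
  simp

lemma Fd_sum_right {ι : Type*} (Rh : Fin k → Fin (k+2) → ℝ) (a : Fin (k+2) → ℝ)
    (s : Finset ι) (g : ι → Fin (k+2) → ℝ) :
    Fd Rh a (∑ j ∈ s, g j) = ∑ j ∈ s, Fd Rh a (g j) := by
  classical
  induction s using Finset.induction_on with
  | empty => simpa using Fd_zero_right Rh a
  | insert _ _ h ih => rw [Finset.sum_insert h, Finset.sum_insert h, Fd_add_right, ih]

lemma Fd_add_left (Rh : Fin k → Fin (k+2) → ℝ) (u v b : Fin (k+2) → ℝ) :
    Fd Rh (u + v) b = Fd Rh u b + Fd Rh v b := by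
  simp [Fd_eq_update_left, Matrix.det_updateRow_add]

lemma Fd_zero_left (Rh : Fin k → Fin (k+2) → ℝ) (b : Fin (k+2) → ℝ) :
    Fd Rh 0 b = 0 := by
  rw [Fd_eq_update_left]
  apply Matrix.det_eq_zero_of_row_eq_zero 0
  simp

lemma Fd_sum_left {ι : Type*} (Rh : Fin k → Fin (k+2) → ℝ) (b : Fin (k+2) → ℝ)
    (s : Finset ι) (g : ι → Fin (k+2) → ℝ) :
    Fd Rh (∑ j ∈ s, g j) b = ∑ j ∈ s, Fd Rh (g j) b := by
  classical
  induction s using Finset.induction_on with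
  | empty => simpa using Fd_zero_left Rh b
  | insert _ _ h ih => rw [Finset.sum_insert h, Finset.sum_insert h, Fd_add_left, ih]

lemma Fd_self (Rh : Fin k → Fin (k+2) → ℝ) (a : Fin (k+2) → ℝ) : Fd Rh a a = 0 := by
  apply Matrix.det_zero_of_row_eq (i := 0) (j := 1)
  · simp [Fin.ext_iff]
  · funext c
    have h1 : (1 : Fin (k+2)) = Fin.succ 0 := by simp [Fin.ext_iff]
    rw [h1]
    simp only [Matrix.of_apply, Fin.cons_succ, Fin.cons_zero]

lemma Fd_antisymm (Rh : Fin k → Fin (k+2) → ℝ) (a b : Fin (k+2) → ℝ) :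
    Fd Rh a b + Fd Rh b a = 0 := by
  have h := Fd_self Rh (a + b)
  rw [Fd_add_left, Fd_add_right, Fd_add_right, Fd_self, Fd_self] at h
  linarith

lemma Fd_repeat (Rh : Fin k → Fin (k+2) → ℝ) (x : Fin (k+2) → ℝ) (j : Fin k) :
    Fd Rh x (Rh j) = 0 := by
  apply Matrix.det_zero_of_row_eq (i := 1) (j := j.succ.succ)
  · simp [Fin.ext_iff]
  · funext c
    have h1 : (1 : Fin (k+2)) = Fin.succ 0 := by simp [Fin.ext_iff]
    rw [h1]
    simp only [Matrix.of_apply, Fin.cons_succ, Fin.cons_zero]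

lemma syzygy (u : Fin (k+3) → Fin (k+2) → ℝ) (c : Fin (k+2)) :
    ∑ j : Fin (k+3), (-1:ℝ)^(j:ℕ) * u j c
      * (Matrix.of (fun a b => u (j.succAbove a) b) : Matrix (Fin (k+2)) (Fin (k+2)) ℝ).det = 0 := by
  have h0 : (Matrix.of (fun (j b : Fin (k+3)) => Fin.cons (u j c) (u j) b)).det = 0 := by
    apply Matrix.det_zero_of_column_eq (i := (0 : Fin (k+3))) (j := c.succ)
    · have : ((c.succ : Fin (k+3)) : ℕ) = (c:ℕ)+1 := by simp
      exact (Fin.succ_ne_zero c).symm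
    · intro r
      have : (c.succ : Fin (k+3)) = c.succ := by
        simp [Fin.ext_iff]
      simp [this]
  rw [Matrix.det_succ_column_zero] at h0
  simp only [Matrix.submatrix, Matrix.of_apply, Fin.cons_zero, Fin.cons_succ] at h0
  exact h0

lemma syzygy' (u : Fin (k+3) → Fin (k+2) → ℝ) :
    ∑ j : Fin (k+3), ((-1:ℝ)^(j:ℕ)
        * (Matrix.of (fun a b => u (j.succAbove a) b) : Matrix (Fin (k+2)) (Fin (k+2)) ℝ).det) • u j
      = 0 := by
  funext c
  rw [Finset.sum_apply]
  simp only [Pi.zero_apply]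
  have h := syzygy u c
  rw [← h]
  apply Finset.sum_congr rfl
  intro j _
  simp only [Pi.smul_apply, smul_eq_mul]
  ring

lemma pluecker (Rh : Fin k → Fin (k+2) → ℝ) (x y z w : Fin (k+2) → ℝ) :
    Fd Rh z w * Fd Rh x y - Fd Rh y w * Fd Rh x z + Fd Rh y z * Fd Rh x w = 0 := by
  set u : Fin (k+3) → Fin (k+2) → ℝ := Fin.cons y (Fin.cons z (Fin.cons w Rh)) with hu
  set coef : Fin (k+3) → ℝ := fun j => (-1:ℝ)^(j:ℕ)
      * (Matrix.of (fun a b => u (j.succAbove a) b) : Matrix (Fin (k+2)) (Fin (k+2)) ℝ).det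
    with hcoef
  have h1 : ∑ j : Fin (k+3), coef j * Fd Rh x (u j) = 0 := by
    have h2 : Fd Rh x (∑ j : Fin (k+3), coef j • u j) = 0 := by
      rw [syzygy' u, Fd_zero_right]
    rw [Fd_sum_right] at h2
    rw [← h2]
    apply Finset.sum_congr rfl
    intro j _
    rw [Fd_smul_right]
  -- evaluate the sum
  rw [Fin.sum_univ_succ, Fin.sum_univ_succ, Fin.sum_univ_succ] at h1
  -- tail vanishes
  have htail : ∀ j : Fin k, coef j.succ.succ.succ * Fd Rh x (u j.succ.succ.succ) = 0 := by
    intro j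
    have : u j.succ.succ.succ = Rh j := by simp [hu]
    rw [this, Fd_repeat, mul_zero]
  rw [Finset.sum_congr rfl (fun j _ => htail j), Finset.sum_const_zero] at h1
  -- the three initial terms
  have hu0 : u 0 = y := by rw [hu, Fin.cons_zero]
  have hu1 : u (Fin.succ 0) = z := by rw [hu, Fin.cons_succ, Fin.cons_zero]
  have hu2 : u (Fin.succ 0).succ = w := by rw [hu, Fin.cons_succ, Fin.cons_succ, Fin.cons_zero]
  have hc0 : coef 0 = Fd Rh z w := by
    simp only [hcoef]
    simp only [Fin.val_zero, pow_zero, one_mul]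
    have hm : (Matrix.of (fun a b => u ((0 : Fin (k+3)).succAbove a) b)
        : Matrix (Fin (k+2)) (Fin (k+2)) ℝ) = Matrix.of (Fin.cons z (Fin.cons w Rh)) := by
      funext a b
      simp only [Matrix.of_apply, Fin.succAbove_zero, hu, Fin.cons_succ]
    rw [hm]
    rfl
  have hc1 : coef (Fin.succ 0) = - Fd Rh y w := by
    simp only [hcoef]
    have hv : ((Fin.succ 0 : Fin (k+3)) : ℕ) = 1 := by simp
    rw [hv]
    have hm : (Matrix.of (fun a b => u ((Fin.succ 0 : Fin (k+3)).succAbove a) b)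
        : Matrix (Fin (k+2)) (Fin (k+2)) ℝ) = Matrix.of (Fin.cons y (Fin.cons w Rh)) := by
      funext a b
      refine Fin.cases ?_ (fun a' => ?_) a
      · simp [hu]
      · rw [Matrix.of_apply, Fin.succ_succAbove_succ]
        simp [hu, Fin.succAbove_zero]
    rw [hm]
    unfold Fd
    ring
  have hc2 : coef (Fin.succ 0).succ = Fd Rh y z := by
    simp only [hcoef]
    have hv : (((Fin.succ 0).succ : Fin (k+3)) : ℕ) = 2 := by simp
    rw [hv]
    have hm : (Matrix.of (fun a b => u (((Fin.succ 0).succ : Fin (k+3)).succAbove a) b)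
        : Matrix (Fin (k+2)) (Fin (k+2)) ℝ) = Matrix.of (Fin.cons y (Fin.cons z Rh)) := by
      funext a b
      refine Fin.cases ?_ (fun a' => ?_) a
      · simp only [Matrix.of_apply, Fin.succ_succAbove_zero, hu, Fin.cons_zero]
      · simp only [Matrix.of_apply, Fin.succ_succAbove_succ, hu, Fin.cons_succ]
        refine Fin.cases ?_ (fun a'' => ?_) a'
        · simp only [Fin.succ_succAbove_zero, Fin.cons_zero]
        · simp only [Fin.succ_succAbove_succ, Fin.succAbove_zero, Fin.cons_succ]
    rw [hm]
    unfold Fd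
    norm_num
  rw [hc0, hc1, hc2, hu0, hu1, hu2, add_zero] at h1
  linarith

lemma det_cons_single {N : ℕ} (p : Fin (N+1)) (B : Fin N → Fin (N+1) → ℝ) :
    (Matrix.of (Fin.cons (Pi.single p (1:ℝ)) B) : Matrix (Fin (N+1)) (Fin (N+1)) ℝ).det
      = (-1:ℝ)^(p:ℕ)
        * (Matrix.of (fun a j => B a (p.succAbove j)) : Matrix (Fin N) (Fin N) ℝ).det := by
  rw [Matrix.det_succ_row_zero]
  rw [Finset.sum_eq_single p]
  · have h1 : (Matrix.of (Fin.cons (Pi.single p (1:ℝ)) B) : Matrix (Fin (N+1)) (Fin (N+1)) ℝ) 0 p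
        = 1 := by simp
    rw [h1, mul_one]
    have hsub : (Matrix.of (Fin.cons (Pi.single p (1:ℝ)) B)
        : Matrix (Fin (N+1)) (Fin (N+1)) ℝ).submatrix Fin.succ p.succAbove
        = Matrix.of (fun a j => B a (p.succAbove j)) := by
      funext a j
      simp [Matrix.submatrix_apply, Fin.cons_succ]
    rw [hsub]
  · intro b _ hb
    have h0 : (Matrix.of (Fin.cons (Pi.single p (1:ℝ)) B) : Matrix (Fin (N+1)) (Fin (N+1)) ℝ) 0 b
        = 0 := by
      simp only [Matrix.of_apply, Fin.cons_zero]
      exact Pi.single_eq_of_ne hb 1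
    rw [h0]
    ring
  · intro h
    exact absurd (Finset.mem_univ p) h

lemma colDiff {N : ℕ} (A : Fin N → Fin (N+1) → ℝ) :
    (Matrix.of (fun a b : Fin N => A a b.succ - A a b.castSucc) : Matrix (Fin N) (Fin N) ℝ).det
      = ∑ b : Fin (N+1), (-1:ℝ)^(b:ℕ)
          * (Matrix.of (fun a c : Fin N => A a (b.succAbove c)) : Matrix (Fin N) (Fin N) ℝ).det := by
  set M : Matrix (Fin (N+1)) (Fin (N+1)) ℝ := Matrix.of (Fin.cons (fun _ => (1:ℝ)) A) with hM
  have hRHS : M.det = ∑ b : Fin (N+1), (-1:ℝ)^(b:ℕ)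
      * (Matrix.of (fun a c : Fin N => A a (b.succAbove c)) : Matrix (Fin N) (Fin N) ℝ).det := by
    rw [Matrix.det_succ_row_zero]
    apply Finset.sum_congr rfl
    intro b _
    have h1 : M 0 b = 1 := by simp [hM]
    rw [h1, mul_one]
    have hsub : M.submatrix Fin.succ b.succAbove
        = Matrix.of (fun a c : Fin N => A a (b.succAbove c)) := by
      funext a c
      simp [hM, Matrix.submatrix_apply, Fin.cons_succ]
    rw [hsub]
  set U : Matrix (Fin (N+1)) (Fin (N+1)) ℝ :=
    Matrix.of (fun b c : Fin (N+1) =>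
      (if c = b then (1:ℝ) else 0) + (if (c:ℕ) = (b:ℕ)+1 then (-1:ℝ) else 0)) with hU
  have hUtri : U.BlockTriangular id := by
    intro i j hij
    have h1 : (j:ℕ) < (i:ℕ) := hij
    simp only [hU, Matrix.of_apply]
    rw [if_neg (fun h => by rw [h] at h1; omega), if_neg (by omega)]
    ring
  have hUdet : U.det = 1 := by
    rw [Matrix.det_of_upperTriangular hUtri]
    apply Finset.prod_eq_one
    intro i _
    have hne : ¬((i:ℕ) = (i:ℕ)+1) := by omega
    simp [hU, hne]
  have hMU : (M * U) = Matrix.of (fun (r : Fin (N+1)) (c : Fin (N+1)) =>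
      Fin.cases (M r 0) (fun c' => M r c'.succ - M r c'.castSucc) c) := by
    funext r c
    refine Fin.cases ?_ (fun c' => ?_) c
    · rw [Matrix.mul_apply]
      rw [Finset.sum_eq_single (0 : Fin (N+1))]
      · have hz : U 0 0 = 1 := by simp [hU]
        rw [hz, mul_one]
        simp
      · intro b _ hb
        have hz : U b 0 = 0 := by
          have h2 : ¬((0:Fin (N+1)) = b) := fun h => hb h.symm
          have h3 : ¬(((0:Fin (N+1)):ℕ) = (b:ℕ)+1) := by simp
          simp [hU, h2, h3]
        rw [hz, mul_zero]
      · intro h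
        exact absurd (Finset.mem_univ _) h
    · rw [Matrix.mul_apply]
      have hU2 : ∀ b : Fin (N+1), U b c'.succ
          = (if b = c'.succ then (1:ℝ) else 0) + (if b = c'.castSucc then (-1:ℝ) else 0) := by
        intro b
        simp only [hU, Matrix.of_apply]
        congr 1
        · by_cases h : b = c'.succ
          · rw [if_pos h.symm, if_pos h]
          · rw [if_neg (fun hh => h hh.symm), if_neg h]
        · by_cases h : b = c'.castSucc
          · rw [if_pos, if_pos h]
            rw [h]
            simp
          · rw [if_neg, if_neg h]
            intro hh
            apply h
            have : (b:ℕ) = (c':ℕ) := by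
              have hv : ((c'.succ : Fin (N+1)):ℕ) = (c':ℕ)+1 := by simp
              omega
            exact Fin.ext (by simpa using this)
      calc ∑ b, M r b * U b c'.succ
          = ∑ b, ((if b = c'.succ then M r b * 1 else M r b * 0)
              + (if b = c'.castSucc then M r b * (-1) else M r b * 0)) := by
            apply Finset.sum_congr rfl
            intro b _
            rw [hU2 b, mul_add, mul_ite, mul_ite]
        _ = M r c'.succ - M r c'.castSucc := by
            rw [Finset.sum_add_distrib]
            simp only [mul_one, mul_zero, mul_neg_one]
            rw [Finset.sum_ite_eq' Finset.univ c'.succ (fun b => M r b),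
              Finset.sum_ite_eq' Finset.univ c'.castSucc (fun b => - M r b)]
            simp
            ring
        _ = Matrix.of (fun (r : Fin (N+1)) (c : Fin (N+1)) =>
              Fin.cases (M r 0) (fun c'' => M r c''.succ - M r c''.castSucc) c) r c'.succ := by
            simp
  have hdet2 : (M * U).det = (Matrix.of (fun a b : Fin N =>
      A a b.succ - A a b.castSucc) : Matrix (Fin N) (Fin N) ℝ).det := by
    rw [hMU, Matrix.det_succ_row_zero]
    rw [Finset.sum_eq_single (0 : Fin (N+1))]
    · have h00 : (Matrix.of (fun (r c : Fin (N+1)) =>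
          Fin.cases (motive := fun _ => ℝ) (M r 0)
            (fun c' => M r c'.succ - M r c'.castSucc) c)) 0 0 = 1 := by
        simp [hM]
      rw [h00]
      simp only [Fin.val_zero, pow_zero, one_mul, mul_one]
      have hsub : (Matrix.of (fun (r : Fin (N+1)) (c : Fin (N+1)) =>
            Fin.cases (motive := fun _ => ℝ) (M r 0)
              (fun c' => M r c'.succ - M r c'.castSucc) c)).submatrix Fin.succ
              ((0 : Fin (N+1)).succAbove)
          = Matrix.of (fun a b : Fin N => A a b.succ - A a b.castSucc) := by
        funext a c
        simp [hM, Matrix.submatrix_apply, Fin.cons_succ, Fin.succAbove_zero]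
      rw [hsub]
    · intro b _ hb
      rcases Fin.eq_zero_or_eq_succ b with hb0 | ⟨b', rfl⟩
      · exact absurd hb0 hb
      · simp [hM]
    · intro h
      exact absurd (Finset.mem_univ _) h
  have := Matrix.det_mul M U
  rw [hUdet, mul_one] at this
  rw [← hdet2, this, hRHS]

lemma Fd_smul_left (Rh : Fin k → Fin (k+2) → ℝ) (c : ℝ) (u b : Fin (k+2) → ℝ) :
    Fd Rh (c • u) b = c * Fd Rh u b := by
  simp [Fd_eq_update_left, Matrix.det_updateRow_smul]

lemma Fd_sub_left (Rh : Fin k → Fin (k+2) → ℝ) (u v b : Fin (k+2) → ℝ) :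
    Fd Rh (u - v) b = Fd Rh u b - Fd Rh v b := by
  have h : u - v = u + (-1 : ℝ) • v := by funext t; simp; ring
  rw [h, Fd_add_left, Fd_smul_left]
  ring

lemma Fd_sub_right (Rh : Fin k → Fin (k+2) → ℝ) (a u v : Fin (k+2) → ℝ) :
    Fd Rh a (u - v) = Fd Rh a u - Fd Rh a v := by
  have h : u - v = u + (-1 : ℝ) • v := by funext t; simp; ring
  rw [h, Fd_add_right, Fd_smul_right]
  ring

lemma Fd_single_r0 (Rh : Fin k → Fin (k+2) → ℝ) (r0 : Fin (k+2) → ℝ) (p : Fin (k+2)) :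
    Fd Rh (Pi.single p (1:ℝ)) r0
      = (-1:ℝ)^(p:ℕ) * (Matrix.of (fun (a : Fin (k+1)) (j : Fin (k+1)) =>
          (Fin.cons r0 Rh : Fin (k+1) → Fin (k+2) → ℝ) a (p.succAbove j))).det := by
  exact det_cons_single p (Fin.cons r0 Rh)

lemma LF2 (Rh : Fin k → Fin (k+2) → ℝ) (c : Fin (k+1)) :
    Fd Rh (Pi.single (0 : Fin (k+2)) (1:ℝ)) (Pi.single c.succ (1:ℝ))
      = (-1:ℝ)^(c:ℕ) * (Matrix.of (fun a j => Rh a ((c.succAbove j).succ))).det := by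
  unfold Fd
  rw [det_cons_single (0 : Fin (k+2)) (Fin.cons (Pi.single c.succ (1:ℝ)) Rh)]
  simp only [Fin.val_zero, pow_zero, one_mul]
  have hm : (Matrix.of (fun (a : Fin (k+1)) (j : Fin (k+1)) =>
      (Fin.cons (Pi.single c.succ (1:ℝ)) Rh : Fin (k+1) → Fin (k+2) → ℝ)
        a ((0 : Fin (k+2)).succAbove j)))
      = Matrix.of (Fin.cons (Pi.single c (1:ℝ)) (fun a j => Rh a j.succ)) := by
    funext a j
    refine Fin.cases ?_ (fun a' => ?_) a
    · simp only [Matrix.of_apply, Fin.succAbove_zero, Fin.cons_zero]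
      by_cases h : j = c
      · rw [h]
        simp
      · rw [Pi.single_eq_of_ne (fun hh => h (Fin.succ_injective _ hh)) 1,
          Pi.single_eq_of_ne h 1]
    · simp only [Matrix.of_apply, Fin.succAbove_zero, Fin.cons_succ]
  rw [hm, det_cons_single]

lemma LF1 (Rh : Fin k → Fin (k+2) → ℝ) (b : Fin (k+1)) :
    Fd Rh (Pi.single b.castSucc (1:ℝ)) (Pi.single (Fin.last (k+1)) (1:ℝ))
      = (-1:ℝ)^((b:ℕ)+k) * (Matrix.of (fun a j =>
          Rh a (b.castSucc.succAbove j.castSucc))).det := by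
  unfold Fd
  rw [det_cons_single b.castSucc (Fin.cons (Pi.single (Fin.last (k+1)) (1:ℝ)) Rh)]
  have hm : (Matrix.of (fun (a : Fin (k+1)) (j : Fin (k+1)) =>
      (Fin.cons (Pi.single (Fin.last (k+1)) (1:ℝ)) Rh : Fin (k+1) → Fin (k+2) → ℝ)
        a (b.castSucc.succAbove j)))
      = Matrix.of (Fin.cons (Pi.single (Fin.last k) (1:ℝ))
          (fun a j => Rh a (b.castSucc.succAbove j))) := by
    funext a j
    refine Fin.cases ?_ (fun a' => ?_) a
    · simp only [Matrix.of_apply, Fin.cons_zero]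
      by_cases h : j = Fin.last k
      · have hlast : b.castSucc.succAbove (Fin.last k) = Fin.last (k+1) := by
          apply Fin.ext
          rw [succAbove_val]
          have hb := b.isLt
          simp only [Fin.val_last, Fin.coe_castSucc]
          rw [if_neg (by omega)]
        rw [h, hlast]
        simp
      · have h2 : b.castSucc.succAbove j ≠ Fin.last (k+1) := by
          intro hh
          apply h
          have hv := congrArg Fin.val hh
          rw [succAbove_val] at hv
          simp only [Fin.val_last, Fin.coe_castSucc] at hv
          have hj := j.isLt
          apply Fin.ext
          simp only [Fin.val_last]
          split at hv <;> omega
        rw [Pi.single_eq_of_ne h2 1, Pi.single_eq_of_ne h 1]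
    · simp only [Matrix.of_apply, Fin.cons_succ]
  rw [hm, det_cons_single]
  have hmm : (Matrix.of (fun (a : Fin k) (j : Fin k) =>
      (fun (a : Fin k) (j : Fin (k+1)) => Rh a (b.castSucc.succAbove j)) a
        ((Fin.last k).succAbove j)))
      = Matrix.of (fun a j => Rh a (b.castSucc.succAbove j.castSucc)) := by
    funext a j
    simp only [Matrix.of_apply, Fin.succAbove_last]
  rw [hmm]
  simp only [Fin.coe_castSucc, Fin.val_last]
  rw [pow_add]
  ring

lemma key (k : ℕ) (A : ℕ → ℕ → ℝ) :
    (Matrix.of (fun a b : Fin (k+1) => A a ((b:ℕ)+1) - A a b)).det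
      * (Matrix.of (fun a b : Fin k => A ((a:ℕ)+1) ((b:ℕ)+1))).det
    = (Matrix.of (fun a b : Fin k => A ((a:ℕ)+1) ((b:ℕ)+1) - A ((a:ℕ)+1) b)).det
      * (Matrix.of (fun a b : Fin (k+1) => A a ((b:ℕ)+1))).det
    - (Matrix.of (fun a b : Fin k => A ((a:ℕ)+1) ((b:ℕ)+2) - A ((a:ℕ)+1) ((b:ℕ)+1))).det
      * (Matrix.of (fun a b : Fin (k+1) => A a b)).det := by
  set Rh : Fin k → Fin (k+2) → ℝ := fun a b => A ((a:ℕ)+1) (b:ℕ) with hRh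
  set r0 : Fin (k+2) → ℝ := fun b => A 0 (b:ℕ) with hr0
  set ones : Fin (k+2) → ℝ := fun _ => (1:ℝ) with hones
  set e0 : Fin (k+2) → ℝ := Pi.single (0 : Fin (k+2)) (1:ℝ) with he0
  set eL : Fin (k+2) → ℝ := Pi.single (Fin.last (k+1)) (1:ℝ) with heL
  have hsum_cast : (∑ b : Fin (k+1), Pi.single b.castSucc (1:ℝ)) = ones - eL := by
    have h1 := Fin.sum_univ_castSucc (f := fun p : Fin (k+2) => Pi.single p (1:ℝ))
    rw [sum_single] at h1
    rw [hones, heL]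
    exact eq_sub_of_add_eq h1.symm
  have hsum_succ : (∑ c : Fin (k+1), Pi.single c.succ (1:ℝ)) = ones - e0 := by
    have h1 := Fin.sum_univ_succ (f := fun p : Fin (k+2) => Pi.single p (1:ℝ))
    rw [sum_single] at h1
    rw [hones, he0]
    exact eq_sub_of_add_eq' h1.symm
  -- T1
  have hT1 : (Matrix.of (fun a b : Fin (k+1) => A a ((b:ℕ)+1) - A a b)).det
      = Fd Rh ones r0 := by
    have hL : (Matrix.of (fun a b : Fin (k+1) => A a ((b:ℕ)+1) - A a b))
        = Matrix.of (fun a b : Fin (k+1) =>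
            (fun (a : Fin (k+1)) (b : Fin (k+2)) => A (a:ℕ) (b:ℕ)) a b.succ
            - (fun (a : Fin (k+1)) (b : Fin (k+2)) => A (a:ℕ) (b:ℕ)) a b.castSucc) := by
      funext a b
      simp only [Matrix.of_apply, Fin.val_succ, Fin.coe_castSucc]
    rw [hL, colDiff (fun (a : Fin (k+1)) (b : Fin (k+2)) => A (a:ℕ) (b:ℕ))]
    have hones' : Fd Rh ones r0 = ∑ p : Fin (k+2), Fd Rh (Pi.single p (1:ℝ)) r0 := by
      rw [← Fd_sum_left, sum_single]
    rw [hones']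
    apply Finset.sum_congr rfl
    intro p _
    rw [Fd_single_r0]
    congr 1
    congr 1
    funext a c
    refine Fin.cases ?_ (fun a' => ?_) a
    · simp only [Matrix.of_apply, Fin.cons_zero, hr0, Fin.val_zero]
    · simp only [Matrix.of_apply, Fin.cons_succ, hRh, Fin.val_succ]
  -- T4
  have hT4 : (Matrix.of (fun a b : Fin (k+1) => A a ((b:ℕ)+1))).det = Fd Rh e0 r0 := by
    rw [he0, Fd_single_r0]
    simp only [Fin.val_zero, pow_zero, one_mul]
    congr 1
    funext a c
    refine Fin.cases ?_ (fun a' => ?_) a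
    · simp only [Matrix.of_apply, Fin.succAbove_zero, Fin.cons_zero, hr0, Fin.val_zero,
        Fin.val_succ]
    · simp only [Matrix.of_apply, Fin.succAbove_zero, Fin.cons_succ, hRh, Fin.val_succ]
  -- T6
  have hT6 : (Matrix.of (fun a b : Fin (k+1) => A a b)).det
      = (-1:ℝ)^(k+1) * Fd Rh eL r0 := by
    rw [heL, Fd_single_r0]
    simp only [Fin.val_last]
    rw [← mul_assoc, ← pow_add]
    have hev : Even ((k+1)+(k+1)) := ⟨k+1, by ring⟩
    rw [hev.neg_one_pow, one_mul]
    congr 1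
    funext a c
    refine Fin.cases ?_ (fun a' => ?_) a
    · simp only [Matrix.of_apply, Fin.succAbove_last, Fin.cons_zero, hr0, Fin.val_zero,
        Fin.coe_castSucc]
    · simp only [Matrix.of_apply, Fin.succAbove_last, Fin.cons_succ, hRh, Fin.val_succ,
        Fin.coe_castSucc]
  -- T2
  have hT2 : (Matrix.of (fun a b : Fin k => A ((a:ℕ)+1) ((b:ℕ)+1))).det
      = (-1:ℝ)^k * Fd Rh e0 eL := by
    have h := LF1 Rh 0
    rw [Fin.castSucc_zero] at h
    simp only [Fin.val_zero, zero_add] at h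
    rw [he0, heL, h, ← mul_assoc, ← pow_add]
    have hev : Even (k+k) := ⟨k, by ring⟩
    rw [hev.neg_one_pow, one_mul]
    congr 1
  -- T3
  have hT3 : (Matrix.of (fun a b : Fin k => A ((a:ℕ)+1) ((b:ℕ)+1) - A ((a:ℕ)+1) b)).det
      = (-1:ℝ)^k * Fd Rh ones eL := by
    have hL : (Matrix.of (fun a b : Fin k => A ((a:ℕ)+1) ((b:ℕ)+1) - A ((a:ℕ)+1) b))
        = Matrix.of (fun a b : Fin k =>
            (fun (a : Fin k) (b : Fin (k+1)) => A ((a:ℕ)+1) (b:ℕ)) a b.succ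
            - (fun (a : Fin k) (b : Fin (k+1)) => A ((a:ℕ)+1) (b:ℕ)) a b.castSucc) := by
      funext a b
      simp only [Matrix.of_apply, Fin.val_succ, Fin.coe_castSucc]
    rw [hL, colDiff (fun (a : Fin k) (b : Fin (k+1)) => A ((a:ℕ)+1) (b:ℕ))]
    have hterm : ∀ b : Fin (k+1), (-1:ℝ)^(b:ℕ)
        * (Matrix.of (fun a c : Fin k =>
            (fun (a : Fin k) (b : Fin (k+1)) => A ((a:ℕ)+1) (b:ℕ)) a (b.succAbove c))).det
        = (-1:ℝ)^k * Fd Rh (Pi.single b.castSucc (1:ℝ)) eL := by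
      intro b
      rw [heL, LF1 Rh b]
      have hm : (Matrix.of (fun (a : Fin k) (j : Fin k) =>
          Rh a (b.castSucc.succAbove j.castSucc)))
          = Matrix.of (fun a c : Fin k =>
              (fun (a : Fin k) (b : Fin (k+1)) => A ((a:ℕ)+1) (b:ℕ)) a (b.succAbove c)) := by
        funext a c
        simp only [Matrix.of_apply, hRh]
        congr 1
        rw [succAbove_val, succAbove_val]
        simp only [Fin.coe_castSucc]
      rw [hm, ← mul_assoc, ← pow_add]
      have h2 : k + ((b:ℕ) + k) = (b:ℕ) + 2*k := by ring
      rw [h2, pow_add, pow_mul]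
      norm_num
    rw [Finset.sum_congr rfl (fun b _ => hterm b)]
    rw [← Finset.mul_sum, ← Fd_sum_left, hsum_cast, Fd_sub_left, Fd_self, sub_zero]
  -- T5
  have hT5 : (Matrix.of (fun a b : Fin k =>
      A ((a:ℕ)+1) ((b:ℕ)+2) - A ((a:ℕ)+1) ((b:ℕ)+1))).det = Fd Rh e0 ones := by
    have hL : (Matrix.of (fun a b : Fin k => A ((a:ℕ)+1) ((b:ℕ)+2) - A ((a:ℕ)+1) ((b:ℕ)+1)))
        = Matrix.of (fun a b : Fin k =>
            (fun (a : Fin k) (b : Fin (k+1)) => A ((a:ℕ)+1) ((b:ℕ)+1)) a b.succ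
            - (fun (a : Fin k) (b : Fin (k+1)) => A ((a:ℕ)+1) ((b:ℕ)+1)) a b.castSucc) := by
      funext a b
      simp only [Matrix.of_apply, Fin.val_succ, Fin.coe_castSucc]
    rw [hL, colDiff (fun (a : Fin k) (b : Fin (k+1)) => A ((a:ℕ)+1) ((b:ℕ)+1))]
    have hterm : ∀ c : Fin (k+1), (-1:ℝ)^(c:ℕ)
        * (Matrix.of (fun a j : Fin k =>
            (fun (a : Fin k) (b : Fin (k+1)) => A ((a:ℕ)+1) ((b:ℕ)+1)) a (c.succAbove j))).det
        = Fd Rh e0 (Pi.single c.succ (1:ℝ)) := by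
      intro c
      rw [he0, LF2 Rh c]
      congr 1
    rw [Finset.sum_congr rfl (fun c _ => hterm c)]
    rw [← Fd_sum_right, hsum_succ, Fd_sub_right, Fd_self, sub_zero]
  rw [hT1, hT2, hT3, hT4, hT5, hT6]
  have P := pluecker Rh e0 eL ones r0
  have Ant := Fd_antisymm Rh eL ones
  linear_combination ((-1:ℝ)^k) * P - ((-1:ℝ)^k * Fd Rh e0 r0) * Ant

end HAux


namespace HAux

lemma Hd_natCast (m : ℕ) (u : ℕ → ℝ) (K n : ℕ) :
    Hd m u (K : ℤ) n
      = (Matrix.of (fun a b : Fin K => fd^[(a:ℕ) * m] u (n + (b:ℕ)))).det := by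
  unfold Hd
  rw [if_neg (by omega)]
  rfl

lemma iter_shift (S : ℕ → ℝ) (p q x : ℕ) : fd^[p] (fd^[q] S) x = fd^[p+q] S x := by
  have h := Function.iterate_add_apply fd p q S
  rw [h]

lemma diff_entry (S : ℕ → ℝ) (t x : ℕ) : fd^[t+1] S x = fd^[t] S (x+1) - fd^[t] S x := by
  have h := Function.iterate_succ_apply' fd t S
  rw [h]
  rfl

end HAux


open HAux

/-- For all `i, k, n ≥ 0`: `H_{k+1}(Δ^{i+1}S_n) H_k(Δ^{i+m}S_{n+1})
= H_k(Δ^{i+m+1}S_n) H_{k+1}(Δ^i S_{n+1}) − H_k(Δ^{i+m+1}S_{n+1}) H_{k+1}(Δ^i S_n)`. -/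
theorem stmt_1 (m : ℕ) (hm : 1 ≤ m) (S : ℕ → ℝ) (i k n : ℕ) :
    Hd m (fd^[i + 1] S) ((k : ℤ) + 1) n * Hd m (fd^[i + m] S) (k : ℤ) (n + 1) =
      Hd m (fd^[i + m + 1] S) (k : ℤ) n * Hd m (fd^[i] S) ((k : ℤ) + 1) (n + 1) -
        Hd m (fd^[i + m + 1] S) (k : ℤ) (n + 1) * Hd m (fd^[i] S) ((k : ℤ) + 1) n := by
  have hk1 : ((k:ℤ)+1) = ((k+1:ℕ):ℤ) := by push_cast; ring
  rw [hk1]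
  simp only [Hd_natCast]
  set A : ℕ → ℕ → ℝ := fun a b => fd^[a*m+i] S (n+b) with hA
  have E1 : (Matrix.of (fun a b : Fin (k+1) => fd^[(a:ℕ) * m] (fd^[i+1] S) (n + (b:ℕ))))
      = Matrix.of (fun a b : Fin (k+1) => A (a:ℕ) ((b:ℕ)+1) - A (a:ℕ) (b:ℕ)) := by
    funext a b
    simp only [Matrix.of_apply, hA]
    rw [iter_shift]
    have h : (a:ℕ)*m + (i+1) = ((a:ℕ)*m + i) + 1 := rfl
    rw [h, diff_entry]
    have h2 : n + ((b:ℕ)+1) = (n + (b:ℕ)) + 1 := rfl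
    rw [h2]
  have E2 : (Matrix.of (fun a b : Fin k => fd^[(a:ℕ) * m] (fd^[i+m] S) (n + 1 + (b:ℕ))))
      = Matrix.of (fun a b : Fin k => A ((a:ℕ)+1) ((b:ℕ)+1)) := by
    funext a b
    simp only [Matrix.of_apply, hA]
    rw [iter_shift]
    have he : (a:ℕ)*m + (i+m) = ((a:ℕ)+1)*m + i := by ring
    rw [he]
    have hx : n+1+(b:ℕ) = n+((b:ℕ)+1) := by omega
    rw [hx]
  have E3 : (Matrix.of (fun a b : Fin k => fd^[(a:ℕ) * m] (fd^[i+m+1] S) (n + (b:ℕ))))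
      = Matrix.of (fun a b : Fin k => A ((a:ℕ)+1) ((b:ℕ)+1) - A ((a:ℕ)+1) (b:ℕ)) := by
    funext a b
    simp only [Matrix.of_apply, hA]
    rw [iter_shift]
    have he : (a:ℕ)*m + (i+m+1) = (((a:ℕ)+1)*m + i) + 1 := by ring
    rw [he, diff_entry]
    have h2 : n + ((b:ℕ)+1) = (n + (b:ℕ)) + 1 := rfl
    rw [h2]
  have E4 : (Matrix.of (fun a b : Fin (k+1) => fd^[(a:ℕ) * m] (fd^[i] S) (n + 1 + (b:ℕ))))
      = Matrix.of (fun a b : Fin (k+1) => A (a:ℕ) ((b:ℕ)+1)) := by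
    funext a b
    simp only [Matrix.of_apply, hA]
    rw [iter_shift]
    have hx : n+1+(b:ℕ) = n+((b:ℕ)+1) := by omega
    rw [hx]
  have E5 : (Matrix.of (fun a b : Fin k => fd^[(a:ℕ) * m] (fd^[i+m+1] S) (n + 1 + (b:ℕ))))
      = Matrix.of (fun a b : Fin k => A ((a:ℕ)+1) ((b:ℕ)+2) - A ((a:ℕ)+1) ((b:ℕ)+1)) := by
    funext a b
    simp only [Matrix.of_apply, hA]
    rw [iter_shift]
    have he : (a:ℕ)*m + (i+m+1) = (((a:ℕ)+1)*m + i) + 1 := by ring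
    rw [he, diff_entry]
    have h2 : n + ((b:ℕ)+2) = (n + 1 + (b:ℕ)) + 1 := by omega
    have h3 : n + ((b:ℕ)+1) = n + 1 + (b:ℕ) := by omega
    rw [h2, h3]
  have E6 : (Matrix.of (fun a b : Fin (k+1) => fd^[(a:ℕ) * m] (fd^[i] S) (n + (b:ℕ))))
      = Matrix.of (fun a b : Fin (k+1) => A (a:ℕ) (b:ℕ)) := by
    funext a b
    simp only [Matrix.of_apply, hA]
    rw [iter_shift]
  rw [E1, E2, E3, E4, E5, E6]
  exact key k A
end

section
/- For all integers i ≥ 0, k ≥ 1 and n ≥ 0, H_k(Δ^{i+1} S_n)·H_{k−1}(Δ^i S_{n+1}) = H_{k−1}(Δ^{i+1} S_n)·H_k(Δ^i S_{n+1}) − H_{k−1}(Δ^{i+1} S_{n+1})·H_k(Δ^i S_n). -/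
namespace Stmt2Aux
open Matrix


variable {R : Type*} [CommRing R]

lemma det_delta {n : ℕ} (i : Fin (n + 1)) :
    Matrix.det (Matrix.of fun r c : Fin n =>
        if i.succAbove r = Fin.castSucc c then (1 : R) else 0) =
      if i = Fin.last n then 1 else 0 := by
  rcases eq_or_ne i (Fin.last n) with h | h
  · subst h
    rw [if_pos rfl]
    have h1 : (Matrix.of fun r c : Fin n =>
        if (Fin.last n).succAbove r = Fin.castSucc c then (1 : R) else 0) = 1 := by
      ext r c
      simp [Fin.succAbove_last, Fin.castSucc_inj, Matrix.one_apply]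
    rw [h1, Matrix.det_one]
  · rw [if_neg h]
    obtain ⟨r₀, hr₀⟩ := Fin.exists_succAbove_eq (Ne.symm h)
    apply Matrix.det_eq_zero_of_row_eq_zero r₀
    intro c
    simp [hr₀, (Fin.castSucc_lt_last c).ne']

lemma last_ne_zero {n : ℕ} : Fin.last (n + 1) ≠ 0 := by
  simp [Fin.ext_iff]

lemma succ_eq_last_iff {n : ℕ} (j : Fin (n + 1)) :
    j.succ = Fin.last (n + 1) ↔ j = Fin.last n := by
  rw [← Fin.succ_last, Fin.succ_inj]

lemma castSucc_succ_ne_zero {n : ℕ} (c : Fin n) : (Fin.castSucc c).succ ≠ 0 :=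
  Fin.succ_ne_zero _

lemma castSucc_succ_ne_last {n : ℕ} (c : Fin n) :
    (Fin.castSucc c).succ ≠ Fin.last (n + 1) := by
  have := c.isLt
  simp [Fin.ext_iff]
  omega

lemma dj_aux {n : ℕ} (A : Matrix (Fin (n + 2)) (Fin (n + 2)) R) :
    A.det * A.det * (A.submatrix (Fin.succ ∘ Fin.castSucc) (Fin.succ ∘ Fin.castSucc)).det =
      A.det * ((A.submatrix Fin.succ Fin.succ).det * (A.submatrix Fin.castSucc Fin.castSucc).det -
        (A.submatrix Fin.succ Fin.castSucc).det * (A.submatrix Fin.castSucc Fin.succ).det) := by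
  set C : Matrix (Fin (n + 2)) (Fin (n + 2)) R := Matrix.of fun i j =>
    if j = 0 then A.adjugate i 0
    else if j = Fin.last (n + 1) then A.adjugate i (Fin.last (n + 1))
    else if i = j then 1 else 0 with hC
  -- the product A * C
  have hAC : A * C = Matrix.of fun i j =>
      if j = 0 then (if i = 0 then A.det else 0)
      else if j = Fin.last (n + 1) then (if i = Fin.last (n + 1) then A.det else 0)
      else A i j := by
    ext i j
    rw [Matrix.mul_apply, Matrix.of_apply]
    by_cases h0 : j = 0
    · subst h0
      rw [if_pos rfl]
      have h2 : ∑ k, A i k * A.adjugate k 0 =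
          A.det * (1 : Matrix (Fin (n + 2)) (Fin (n + 2)) R) i 0 := by
        rw [← Matrix.mul_apply, Matrix.mul_adjugate, Matrix.smul_apply, smul_eq_mul]
      rw [Finset.sum_congr rfl
        (fun k _ => by rw [show C k 0 = A.adjugate k 0 from by simp [hC]])]
      rw [h2, Matrix.one_apply]
      split <;> simp
    · rw [if_neg h0]
      by_cases hl : j = Fin.last (n + 1)
      · subst hl
        rw [if_pos rfl]
        have h2 : ∑ k, A i k * A.adjugate k (Fin.last (n + 1)) =
            A.det * (1 : Matrix (Fin (n + 2)) (Fin (n + 2)) R) i (Fin.last (n + 1)) := by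
          rw [← Matrix.mul_apply, Matrix.mul_adjugate, Matrix.smul_apply, smul_eq_mul]
        rw [Finset.sum_congr rfl
          (fun k _ => by
            rw [show C k (Fin.last (n + 1)) = A.adjugate k (Fin.last (n + 1)) from by
              simp [hC, last_ne_zero]])]
        rw [h2, Matrix.one_apply]
        split <;> simp
      · rw [if_neg hl]
        rw [Finset.sum_congr rfl
          (fun k _ => by
            rw [show C k j = if k = j then (1 : R) else 0 from by
              simp only [hC, Matrix.of_apply, if_neg h0, if_neg hl]])]
        rw [Finset.sum_congr rfl (fun k _ => by rw [mul_ite, mul_one, mul_zero])]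
        rw [Finset.sum_ite_eq' Finset.univ j (fun k => A i k), if_pos (Finset.mem_univ j)]
  -- det (A * C) = det A * det A * det inner
  have h1 : (A * C).det =
      A.det * (A.det *
        (A.submatrix (Fin.succ ∘ Fin.castSucc) (Fin.succ ∘ Fin.castSucc)).det) := by
    rw [det_succ_column_zero]
    rw [Fintype.sum_eq_single (0 : Fin (n + 2)) ?_]
    · have e1 : (A * C) 0 0 = A.det := by rw [hAC]; simp
      rw [e1, Fin.succAbove_zero, Fin.val_zero, pow_zero, one_mul]
      congr 1
      -- det of the submatrix succ succ
      have hM1 : (A * C).submatrix Fin.succ Fin.succ = Matrix.of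
          (fun i j : Fin (n + 1) =>
            if j = Fin.last n then (if i = Fin.last n then A.det else 0)
            else A i.succ j.succ) := by
        ext i j
        rw [Matrix.submatrix_apply, hAC, Matrix.of_apply, Matrix.of_apply,
          if_neg (Fin.succ_ne_zero j)]
        by_cases hl : j = Fin.last n
        · subst hl
          rw [Fin.succ_last, if_pos rfl, if_pos rfl]
          by_cases hi : i = Fin.last n
          · subst hi; rw [Fin.succ_last, if_pos rfl, if_pos rfl]
          · rw [if_neg hi, if_neg (fun h => hi ((succ_eq_last_iff i).mp h))]
        · rw [if_neg hl, if_neg (fun h => hl ((succ_eq_last_iff j).mp h))]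
      rw [hM1, det_succ_column _ (Fin.last n)]
      rw [Fintype.sum_eq_single (Fin.last n) ?_]
      · rw [Matrix.of_apply, if_pos rfl, if_pos rfl, Fin.succAbove_last]
        have hv : ((Fin.last n : Fin (n + 1)) : ℕ) + ((Fin.last n : Fin (n + 1)) : ℕ)
            = n + n := rfl
        rw [hv, Even.neg_one_pow ⟨n, rfl⟩, one_mul]
        have hx : (Matrix.of
            (fun i j : Fin (n + 1) =>
              if j = Fin.last n then (if i = Fin.last n then A.det else 0)
              else A i.succ j.succ)).submatrix Fin.castSucc Fin.castSucc =
            A.submatrix (Fin.succ ∘ Fin.castSucc) (Fin.succ ∘ Fin.castSucc) := by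
          ext i j
          rw [Matrix.submatrix_apply, Matrix.of_apply,
            if_neg (Fin.ne_last_of_lt (Fin.castSucc_lt_last j))]
          rfl
        rw [hx]
      · intro i hi
        rw [Matrix.of_apply, if_pos rfl, if_neg hi, mul_zero, zero_mul]
    · intro i hi
      have e0 : (A * C) i 0 = 0 := by rw [hAC]; simp [hi]
      rw [e0, mul_zero, zero_mul]
  -- det C
  have hdetC : C.det = A.adjugate 0 0 * A.adjugate (Fin.last (n + 1)) (Fin.last (n + 1)) -
      A.adjugate 0 (Fin.last (n + 1)) * A.adjugate (Fin.last (n + 1)) 0 := by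
    rw [det_succ_row_zero]
    rw [Fintype.sum_eq_add (0 : Fin (n + 2)) (Fin.last (n + 1)) (Ne.symm last_ne_zero) ?_]
    · -- two main terms
      have t1 : C 0 0 = A.adjugate 0 0 := by simp [hC]
      have t2 : C 0 (Fin.last (n + 1)) = A.adjugate 0 (Fin.last (n + 1)) := by
        simp [hC, last_ne_zero]
      rw [t1, t2, Fin.succAbove_zero, Fin.succAbove_last, Fin.val_zero, pow_zero, one_mul]
      -- det D1
      have hD1 : (C.submatrix Fin.succ Fin.succ).det =
          A.adjugate (Fin.last (n + 1)) (Fin.last (n + 1)) := by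
        have hsub : ∀ i : Fin (n + 1), ((C.submatrix Fin.succ Fin.succ).submatrix
            i.succAbove (Fin.last n).succAbove) = Matrix.of
            (fun r c : Fin n =>
              if i.succAbove r = Fin.castSucc c then (1 : R) else 0) := by
          intro i
          ext r c
          rw [Fin.succAbove_last]
          simp only [Matrix.submatrix_apply, Matrix.of_apply, hC]
          rw [if_neg (castSucc_succ_ne_zero c), if_neg (castSucc_succ_ne_last c)]
          simp [Fin.succ_inj]
        rw [det_succ_column _ (Fin.last n)]
        rw [Fintype.sum_eq_single (Fin.last n) ?_]
        · have e1 : C.submatrix Fin.succ Fin.succ (Fin.last n) (Fin.last n) =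
              A.adjugate (Fin.last (n + 1)) (Fin.last (n + 1)) := by
            simp [hC, Fin.succ_last, last_ne_zero]
          rw [e1, hsub, det_delta, if_pos rfl, mul_one]
          have hv : ((Fin.last n : Fin (n + 1)) : ℕ) + ((Fin.last n : Fin (n + 1)) : ℕ)
              = n + n := rfl
          rw [hv, Even.neg_one_pow ⟨n, rfl⟩, one_mul]
        · intro i hi
          rw [hsub, det_delta, if_neg hi, mul_zero]
      -- det D2
      have hD2 : (C.submatrix Fin.succ Fin.castSucc).det =
          (-1 : R) ^ n * A.adjugate (Fin.last (n + 1)) 0 := by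
        have hsub : ∀ i : Fin (n + 1), ((C.submatrix Fin.succ Fin.castSucc).submatrix
            i.succAbove Fin.succ) = Matrix.of
            (fun r c : Fin n =>
              if i.succAbove r = Fin.castSucc c then (1 : R) else 0) := by
          intro i
          ext r c
          simp only [Matrix.submatrix_apply, Matrix.of_apply, hC, ← Fin.succ_castSucc]
          rw [if_neg (castSucc_succ_ne_zero c), if_neg (castSucc_succ_ne_last c)]
          simp [Fin.succ_inj]
        rw [det_succ_column_zero]
        rw [Fintype.sum_eq_single (Fin.last n) ?_]
        · have e1 : C.submatrix Fin.succ Fin.castSucc (Fin.last n) 0 =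
              A.adjugate (Fin.last (n + 1)) 0 := by
            simp [hC, Fin.succ_last]
          rw [e1, hsub, det_delta, if_pos rfl, mul_one]
          rfl
        · intro i hi
          rw [hsub, det_delta, if_neg hi, mul_zero]
      rw [hD1, hD2]
      have hsgn : (-1 : R) ^ (((Fin.last (n + 1) : Fin (n + 2)) : ℕ)) * (-1 : R) ^ n
          = -1 := by
        have hv : ((Fin.last (n + 1) : Fin (n + 2)) : ℕ) = n + 1 := rfl
        rw [hv, ← pow_add]
        have h2 : n + 1 + n = 2 * n + 1 := by ring
        rw [h2, pow_succ, Even.neg_one_pow ⟨n, by ring⟩, one_mul]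
      linear_combination (A.adjugate 0 (Fin.last (n + 1)) *
        A.adjugate (Fin.last (n + 1)) 0) * hsgn
    · intro j hj
      have hcj : C 0 j = 0 := by
        simp only [hC, Matrix.of_apply, if_neg hj.1, if_neg hj.2]
        rw [if_neg (Ne.symm hj.1)]
      rw [hcj, mul_zero, zero_mul]
  -- combine
  have hmul : (A * C).det = A.det * C.det := det_mul A C
  rw [h1, hdetC] at hmul
  rw [mul_assoc, hmul]
  rw [Matrix.adjugate_fin_succ_eq_det_submatrix, Matrix.adjugate_fin_succ_eq_det_submatrix,
    Matrix.adjugate_fin_succ_eq_det_submatrix, Matrix.adjugate_fin_succ_eq_det_submatrix]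
  simp only [Fin.succAbove_zero, Fin.succAbove_last, Fin.val_zero, Fin.val_last]
  have hs1 : ((-1 : R)) ^ (0 + 0) = 1 := by norm_num
  have hs2 : ((-1 : R)) ^ ((n + 1) + (n + 1)) = 1 := Even.neg_one_pow ⟨n + 1, rfl⟩
  have hs3 : ((-1 : R)) ^ ((n + 1) + 0) * ((-1 : R)) ^ (0 + (n + 1)) = 1 := by
    rw [← pow_add]
    exact Even.neg_one_pow ⟨n + 1, by omega⟩
  rw [hs1, hs2]
  linear_combination (- A.det * (A.submatrix Fin.castSucc Fin.succ).det *
    (A.submatrix Fin.succ Fin.castSucc).det) * hs3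





/-- Desnanot–Jacobi / Dodgson condensation identity. -/
lemma dj {R : Type*} [CommRing R] {n : ℕ} (A : Matrix (Fin (n + 2)) (Fin (n + 2)) R) :
    A.det * (A.submatrix (Fin.succ ∘ Fin.castSucc) (Fin.succ ∘ Fin.castSucc)).det =
      (A.submatrix Fin.succ Fin.succ).det * (A.submatrix Fin.castSucc Fin.castSucc).det -
        (A.submatrix Fin.succ Fin.castSucc).det * (A.submatrix Fin.castSucc Fin.succ).det := by
  -- first for the generic matrix
  have key : ∀ (X : Matrix (Fin (n + 2)) (Fin (n + 2))
      (MvPolynomial (Fin (n + 2) × Fin (n + 2)) ℤ)), X = mvPolynomialX _ _ ℤ →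
      X.det * (X.submatrix (Fin.succ ∘ Fin.castSucc) (Fin.succ ∘ Fin.castSucc)).det =
      (X.submatrix Fin.succ Fin.succ).det * (X.submatrix Fin.castSucc Fin.castSucc).det -
        (X.submatrix Fin.succ Fin.castSucc).det * (X.submatrix Fin.castSucc Fin.succ).det := by
    intro X hX
    have hdet : X.det ≠ 0 := by rw [hX]; exact det_mvPolynomialX_ne_zero _ _
    apply mul_left_cancel₀ hdet
    rw [← mul_assoc]
    exact dj_aux X
  have hgen := key _ rfl
  -- now map to R via evaluation
  let f : MvPolynomial (Fin (n + 2) × Fin (n + 2)) ℤ →+* R :=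
    (MvPolynomial.eval₂Hom (Int.castRingHom R) (fun p : Fin (n + 2) × Fin (n + 2) => A p.1 p.2))
  have hmap : (mvPolynomialX (Fin (n + 2)) (Fin (n + 2)) ℤ).map f = A := by
    exact mvPolynomialX_map_eval₂ (Int.castRingHom R) A
  have := congrArg f hgen
  simp only [_root_.map_mul, _root_.map_sub, RingHom.map_det, RingHom.mapMatrix_apply] at this
  simp only [← Matrix.submatrix_map] at this
  rw [hmap] at this
  exact this




lemma fd_iter_comm (a : ℕ) (u : ℕ → ℝ) : fd^[a] (fd u) = fd (fd^[a] u) := by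
  rw [← Function.iterate_succ_apply, Function.iterate_succ_apply']

/-- the bordered matrix: a row of ones on top of the Hankel-type matrix -/
noncomputable def bmat (m : ℕ) (u : ℕ → ℝ) (k n : ℕ) :
    Matrix (Fin (k + 1)) (Fin (k + 1)) ℝ :=
  Matrix.of fun i j => if i.val = 0 then 1 else fd^[(i.val - 1) * m] u (n + j.val)

lemma det_bmat (m : ℕ) (u : ℕ → ℝ) (k n : ℕ) :
    (bmat m u k n).det =
      (Matrix.of fun p q : Fin k => fd^[p.val * m] (fd u) (n + q.val)).det := by
  set B' : Matrix (Fin (k + 1)) (Fin (k + 1)) ℝ := Matrix.of fun i j =>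
    if hj : j.val = 0 then bmat m u k n i j
    else bmat m u k n i j - bmat m u k n i ⟨j.val - 1, by omega⟩ with hB'
  have h1 : (bmat m u k n).det = B'.det := by
    apply det_eq_of_forall_col_eq_smul_add_pred (fun _ => (1 : ℝ))
    · intro i
      simp [hB']
    · intro i j
      have hne : (j.succ).val ≠ 0 := by simp [Fin.val_succ]
      have hcs : (⟨(j.succ).val - 1, by omega⟩ : Fin (k + 1)) = j.castSucc := by
        simp [Fin.ext_iff]
      simp only [hB', Matrix.of_apply, dif_neg hne, hcs]
      ring
  rw [h1, det_succ_row_zero]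
  rw [Fintype.sum_eq_single (0 : Fin (k + 1)) ?_]
  · have e0 : B' 0 0 = 1 := by simp [hB', bmat]
    rw [e0, Fin.succAbove_zero, Fin.val_zero, pow_zero, one_mul, one_mul]
    congr 1
    ext p q
    have hne : (q.succ).val ≠ 0 := by simp [Fin.val_succ]
    have hne' : (p.succ).val ≠ 0 := by simp [Fin.val_succ]
    have hcs : (⟨(q.succ).val - 1, by omega⟩ : Fin (k + 1)) = q.castSucc := by
      simp [Fin.ext_iff]
    simp only [Matrix.submatrix_apply, hB', Matrix.of_apply, dif_neg hne, hcs, bmat,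
      if_neg hne']
    have hm : ((p.succ).val - 1) * m = p.val * m := by simp [Fin.val_succ]
    rw [hm, fd_iter_comm]
    rfl
  · intro j hj
    have hj' : j.val ≠ 0 := fun h => hj (Fin.ext h)
    have e0 : B' 0 j = 0 := by
      simp only [hB', Matrix.of_apply, dif_neg hj', bmat]
      norm_num
    rw [e0, mul_zero, zero_mul]



end Stmt2Aux

open Matrix Stmt2Aux in
/-- Lemma 2: for `i ≥ 0`, `k ≥ 1`, `n ≥ 0`: `H_k(Δ^{i+1}S_n) H_{k−1}(Δ^i S_{n+1})
= H_{k−1}(Δ^{i+1}S_n) H_k(Δ^i S_{n+1}) − H_{k−1}(Δ^{i+1}S_{n+1}) H_k(Δ^i S_n)`. -/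
theorem stmt_2 (m : ℕ) (hm : 1 ≤ m) (S : ℕ → ℝ) (i k n : ℕ) (hk : 1 ≤ k) :
    Hd m (fd^[i + 1] S) (k : ℤ) n * Hd m (fd^[i] S) ((k : ℤ) - 1) (n + 1) =
      Hd m (fd^[i + 1] S) ((k : ℤ) - 1) n * Hd m (fd^[i] S) (k : ℤ) (n + 1) -
        Hd m (fd^[i + 1] S) ((k : ℤ) - 1) (n + 1) * Hd m (fd^[i] S) (k : ℤ) n := by
  obtain ⟨k', rfl⟩ : ∃ k', k = k' + 1 := ⟨k - 1, by omega⟩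
  set u := fd^[i] S with hu
  have hfdu : fd^[i + 1] S = fd u := Function.iterate_succ_apply' fd i S
  have hHd : ∀ (v : ℕ → ℝ) (a b : ℕ), Hd m v (a : ℤ) b =
      (Matrix.of fun p q : Fin a => fd^[p.val * m] v (b + q.val)).det := by
    intro v a b
    rw [Hd, if_neg (by omega)]
    rfl
  have hk1 : ((k' + 1 : ℕ) : ℤ) - 1 = ((k' : ℕ) : ℤ) := by push_cast; ring
  rw [hfdu, hk1, hHd, hHd, hHd, hHd, hHd, hHd]
  have hB := dj (bmat m u (k' + 1) n)
  have e0 : (bmat m u (k' + 1) n).det =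
      (Matrix.of fun p q : Fin (k' + 1) => fd^[p.val * m] (fd u) (n + q.val)).det :=
    det_bmat m u (k' + 1) n
  have e1 : (bmat m u (k' + 1) n).submatrix Fin.succ Fin.succ =
      (Matrix.of fun p q : Fin (k' + 1) => fd^[p.val * m] u ((n + 1) + q.val)) := by
    ext p q
    simp only [Matrix.submatrix_apply, bmat, Matrix.of_apply, Fin.val_succ]
    rw [if_neg (by omega)]
    have h2 : (p.val + 1 - 1) * m = p.val * m := by rw [Nat.add_sub_cancel]
    rw [h2, show n + (q.val + 1) = (n + 1) + q.val from by omega]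
  have e2 : (bmat m u (k' + 1) n).submatrix Fin.castSucc Fin.castSucc = bmat m u k' n := by
    ext p q
    rfl
  have e3 : (bmat m u (k' + 1) n).submatrix Fin.succ Fin.castSucc =
      (Matrix.of fun p q : Fin (k' + 1) => fd^[p.val * m] u (n + q.val)) := by
    ext p q
    simp only [Matrix.submatrix_apply, bmat, Matrix.of_apply, Fin.val_succ]
    rw [if_neg (by omega)]
    have h2 : (p.val + 1 - 1) * m = p.val * m := by rw [Nat.add_sub_cancel]
    rw [h2]
    rfl
  have e4 : (bmat m u (k' + 1) n).submatrix Fin.castSucc Fin.succ = bmat m u k' (n + 1) := by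
    ext p q
    simp only [Matrix.submatrix_apply, bmat, Matrix.of_apply, Fin.coe_castSucc, Fin.val_succ]
    rw [show n + (q.val + 1) = (n + 1) + q.val from by omega]
  have e5 : (bmat m u (k' + 1) n).submatrix (Fin.succ ∘ Fin.castSucc)
      (Fin.succ ∘ Fin.castSucc) =
      (Matrix.of fun p q : Fin k' => fd^[p.val * m] u ((n + 1) + q.val)) := by
    ext p q
    simp only [Matrix.submatrix_apply, Function.comp, bmat, Matrix.of_apply, Fin.val_succ,
      Fin.coe_castSucc]
    rw [if_neg (by omega)]
    have h2 : (p.val + 1 - 1) * m = p.val * m := by rw [Nat.add_sub_cancel]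
    rw [h2, show n + (q.val + 1) = (n + 1) + q.val from by omega]
  rw [e1, e2, e3, e4, e5, e0, det_bmat, det_bmat] at hB
  linarith [hB]
end

section
/- For all integers i ≥ 0, k ≥ 1 and n ≥ 0, H_{k+1}(Δ^i S_n)·H_{k−1}(Δ^{i+m} S_{n+1}) = H_k(Δ^i S_n)·H_k(Δ^{i+m} S_{n+1}) − H_k(Δ^i S_{n+1})·H_k(Δ^{i+m} S_n). -/
open Matrix

variable {R : Type*} [CommRing R] {n : ℕ}

/-- The embedding equiv putting indices 0 and last first. -/
noncomputable def djEquiv (n : ℕ) : (Fin 2 ⊕ Fin n) ≃ Fin (n+2) := by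
  apply Equiv.ofBijective (Sum.elim ![0, Fin.last (n+1)] (fun i => i.succ.castSucc))
  rw [Fintype.bijective_iff_injective_and_card]
  constructor
  · intro x y h
    match x, y with
    | .inl a, .inl b =>
      fin_cases a <;> fin_cases b <;> simp_all [Fin.ext_iff]
    | .inl a, .inr b =>
      exfalso; fin_cases a <;> simp_all [Fin.ext_iff] <;> omega
    | .inr a, .inl b =>
      exfalso; fin_cases b <;> simp_all [Fin.ext_iff] <;> omega
    | .inr a, .inr b =>
      simp_all [Fin.ext_iff]
  · simp; omega

lemma djEquiv_inl_zero : djEquiv n (.inl 0) = 0 := rfl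
lemma djEquiv_inl_one : djEquiv n (.inl 1) = Fin.last (n+1) := rfl
lemma djEquiv_inr (i : Fin n) : djEquiv n (.inr i) = i.succ.castSucc := rfl

/-- Desnanot–Jacobi, multiplied by `det A`, over any commutative ring. -/
lemma dj_mul (A : Matrix (Fin (n+2)) (Fin (n+2)) R) :
    A.det *
      ((A.submatrix (Fin.last (n+1)).succAbove (Fin.last (n+1)).succAbove).det *
        (A.submatrix (0 : Fin (n+2)).succAbove (0 : Fin (n+2)).succAbove).det -
       (A.submatrix (Fin.last (n+1)).succAbove (0 : Fin (n+2)).succAbove).det *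
        (A.submatrix (0 : Fin (n+2)).succAbove (Fin.last (n+1)).succAbove).det) =
      A.det ^ 2 *
        (A.submatrix (fun i : Fin n => i.succ.castSucc) (fun i : Fin n => i.succ.castSucc)).det := by
  set L : Fin (n+2) := Fin.last (n+1) with hL
  set P : Matrix (Fin (n+2)) (Fin (n+2)) R := Matrix.of fun r c =>
    if c = 0 then adjugate A r 0 else if c = L then adjugate A r L else
      if r = c then 1 else 0 with hP
  have hL0 : L ≠ 0 := by simp [hL, Fin.ext_iff]
  have hmid0 : ∀ i : Fin n, i.succ.castSucc ≠ 0 := by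
    intro i; simp [Fin.ext_iff]
  have hmidL : ∀ i : Fin n, i.succ.castSucc ≠ L := by
    intro i; simp [hL, Fin.ext_iff]; omega
  have hmid0' : ∀ i : Fin n, i.castSucc.succ ≠ 0 := fun i => by simpa using hmid0 i
  have hmidL' : ∀ i : Fin n, i.castSucc.succ ≠ L := fun i => by simpa using hmidL i
  -- det P
  have hPsub : P.submatrix (djEquiv n) (djEquiv n) =
      Matrix.fromBlocks
        (!![adjugate A 0 0, adjugate A 0 L; adjugate A L 0, adjugate A L L]) 0
        (Matrix.of fun (i : Fin n) (j : Fin 2) =>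
          adjugate A i.succ.castSucc (![0, L] j)) 1 := by
    ext x y
    match x, y with
    | .inl a, .inl b =>
      fin_cases a <;> fin_cases b <;>
        simp [hP, djEquiv_inl_zero, djEquiv_inl_one, hL0, hL0.symm, ← hL]
    | .inl a, .inr b =>
      fin_cases a <;>
        simp [hP, djEquiv_inl_zero, djEquiv_inl_one, djEquiv_inr,
          (hmid0 b).symm, (hmidL b).symm, hL0.symm, Ne.symm] <;>
      · intro h; exact absurd h.symm (by first | exact (hmid0' b).symm | exact (hmidL' b).symm)
    | .inr a, .inl b =>
      fin_cases b <;> simp [hP, djEquiv_inl_zero, djEquiv_inl_one, djEquiv_inr, hL0, ← hL]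
    | .inr a, .inr b =>
      have hb : (b : ℕ) + 1 ≠ n + 1 := by omega
      simp [hP, djEquiv_inr, hmid0', hmidL', Matrix.one_apply]
  have hdetP : P.det = adjugate A 0 0 * adjugate A L L - adjugate A 0 L * adjugate A L 0 := by
    rw [← Matrix.det_submatrix_equiv_self (djEquiv n), hPsub,
      Matrix.det_fromBlocks_zero₁₂, Matrix.det_one, mul_one, Matrix.det_fin_two]
    simp
  -- A * P
  have hAP : ∀ r c, (A * P) r c =
      if c = 0 then (A.det • (1 : Matrix (Fin (n+2)) (Fin (n+2)) R)) r 0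
      else if c = L then (A.det • (1 : Matrix (Fin (n+2)) (Fin (n+2)) R)) r L
      else A r c := by
    intro r c
    by_cases h0 : c = 0
    · subst h0
      rw [if_pos rfl, ← Matrix.mul_adjugate]
      simp [Matrix.mul_apply, hP]
    rw [if_neg h0]
    by_cases hLc : c = L
    · subst hLc
      rw [if_pos rfl, ← Matrix.mul_adjugate]
      simp [Matrix.mul_apply, hP, hL0]
    rw [if_neg hLc]
    simp [Matrix.mul_apply, hP, h0, hLc, mul_ite]
  have hAPsub : (A * P).submatrix (djEquiv n) (djEquiv n) =
      Matrix.fromBlocks (A.det • (1 : Matrix (Fin 2) (Fin 2) R))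
        (Matrix.of fun (a : Fin 2) (j : Fin n) => A (![0, L] a) j.succ.castSucc) 0
        (A.submatrix (fun i : Fin n => i.succ.castSucc) (fun i : Fin n => i.succ.castSucc)) := by
    ext x y
    match x, y with
    | .inl a, .inl b =>
      fin_cases a <;> fin_cases b <;>
        simp [hAP, djEquiv_inl_zero, djEquiv_inl_one, hL0, hL0.symm, Matrix.one_apply,
          Matrix.smul_apply, ← hL]
    | .inl a, .inr b =>
      fin_cases a <;>
        simp [hAP, djEquiv_inl_zero, djEquiv_inl_one, djEquiv_inr,
          hmid0 b, hmidL b, hmidL' b, Fin.succ_ne_zero, ← hL]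
    | .inr a, .inl b =>
      have ha : (a : ℕ) + 1 ≠ n + 1 := by omega
      fin_cases b <;>
        simp [hAP, djEquiv_inl_zero, djEquiv_inl_one, djEquiv_inr, hmid0 a, hmidL a,
          Matrix.one_apply, Fin.ext_iff, hL, ha, show (a : ℕ) ≠ n by omega]
    | .inr a, .inr b =>
      simp [hAP, djEquiv_inr, hmid0, hmidL, hmid0', hmidL']
  have hdetAP : (A * P).det = A.det ^ 2 *
      (A.submatrix (fun i : Fin n => i.succ.castSucc) (fun i : Fin n => i.succ.castSucc)).det := by
    rw [← Matrix.det_submatrix_equiv_self (djEquiv n), hAPsub,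
      Matrix.det_fromBlocks_zero₂₁, Matrix.det_smul, Matrix.det_one, mul_one]
    simp [sq]
  have key : A.det * P.det = A.det ^ 2 *
      (A.submatrix (fun i : Fin n => i.succ.castSucc) (fun i : Fin n => i.succ.castSucc)).det := by
    rw [← Matrix.det_mul, hdetAP]
  rw [hdetP] at key
  rw [← key]
  congr 1
  rw [Matrix.adjugate_fin_succ_eq_det_submatrix, Matrix.adjugate_fin_succ_eq_det_submatrix,
    Matrix.adjugate_fin_succ_eq_det_submatrix, Matrix.adjugate_fin_succ_eq_det_submatrix]
  have he : ∀ k : ℕ, ((-1 : R) ^ k) * ((-1 : R) ^ k) = 1 := by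
    intro k; rw [← pow_add]; exact Even.neg_one_pow ⟨k, rfl⟩
  simp only [Fin.val_zero, Nat.add_zero, Nat.zero_add, pow_zero, one_mul]
  have hpow : ((-1 : R)) ^ ((L : ℕ) * 2) = 1 :=
    Even.neg_one_pow ⟨(L : ℕ), by ring⟩
  ring_nf
  rw [hpow]
  ring

/-- Desnanot–Jacobi identity over any commutative ring. -/
lemma dj (A : Matrix (Fin (n+2)) (Fin (n+2)) R) :
    A.det *
      (A.submatrix (fun i : Fin n => i.succ.castSucc) (fun i : Fin n => i.succ.castSucc)).det =
    (A.submatrix (Fin.last (n+1)).succAbove (Fin.last (n+1)).succAbove).det *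
      (A.submatrix (0 : Fin (n+2)).succAbove (0 : Fin (n+2)).succAbove).det -
    (A.submatrix (Fin.last (n+1)).succAbove (0 : Fin (n+2)).succAbove).det *
      (A.submatrix (0 : Fin (n+2)).succAbove (Fin.last (n+1)).succAbove).det := by
  -- first prove it for the generic matrix over a polynomial ring, where det is cancellable
  set σ := MvPolynomial (Fin (n+2) × Fin (n+2)) ℤ
  set X : Matrix (Fin (n+2)) (Fin (n+2)) σ :=
    Matrix.of fun i j => MvPolynomial.X (i, j) with hX
  have hdX : X.det ≠ 0 := by
    intro h
    have := congrArg (MvPolynomial.eval₂Hom (Int.castRingHom ℤ)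
      (fun p : Fin (n+2) × Fin (n+2) => if p.1 = p.2 then (1:ℤ) else 0)) h
    rw [RingHom.map_det, map_zero] at this
    have h1 : (MvPolynomial.eval₂Hom (Int.castRingHom ℤ)
        (fun p : Fin (n+2) × Fin (n+2) => if p.1 = p.2 then (1:ℤ) else 0)).mapMatrix X
        = (1 : Matrix (Fin (n+2)) (Fin (n+2)) ℤ) := by
      ext a b
      simp [hX, Matrix.one_apply]
    rw [h1, Matrix.det_one] at this
    exact one_ne_zero this
  have keyX : X.det *
      (X.submatrix (fun i : Fin n => i.succ.castSucc) (fun i : Fin n => i.succ.castSucc)).det =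
      (X.submatrix (Fin.last (n+1)).succAbove (Fin.last (n+1)).succAbove).det *
        (X.submatrix (0 : Fin (n+2)).succAbove (0 : Fin (n+2)).succAbove).det -
      (X.submatrix (Fin.last (n+1)).succAbove (0 : Fin (n+2)).succAbove).det *
        (X.submatrix (0 : Fin (n+2)).succAbove (Fin.last (n+1)).succAbove).det := by
    have h := dj_mul X
    rw [sq, mul_assoc] at h
    exact (mul_left_cancel₀ hdX h).symm
  -- specialize via the evaluation homomorphism
  set f : σ →+* R := (MvPolynomial.eval₂Hom (Int.castRingHom R)
    (fun p : Fin (n+2) × Fin (n+2) => A p.1 p.2))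
  have hfX : f.mapMatrix X = A := by
    ext a b
    simp only [RingHom.mapMatrix_apply, Matrix.map_apply, hX, Matrix.of_apply, f]
    exact MvPolynomial.eval₂Hom_X' _ _ _
  have := congrArg f keyX
  simp only [_root_.map_mul, map_sub, RingHom.map_det] at this
  have hsub : ∀ {a : ℕ} (r : Fin a → Fin (n+2)) (c : Fin a → Fin (n+2)),
      f.mapMatrix (X.submatrix r c) = A.submatrix r c := by
    intro a r c
    ext x y
    simp only [RingHom.mapMatrix_apply, Matrix.map_apply, Matrix.submatrix_apply, hX,
      Matrix.of_apply, f]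
    exact MvPolynomial.eval₂Hom_X' _ _ _
  rw [hfX] at this
  rw [hsub, hsub, hsub, hsub, hsub] at this
  exact this


lemma Hd_natCast (m : ℕ) (u : ℕ → ℝ) (j n : ℕ) :
    Hd m u (j : ℤ) n =
      Matrix.det (Matrix.of fun a b : Fin j => fd^[a.val * m] u (n + b.val)) := by
  simp [Hd]



/-- For `i ≥ 0`, `k ≥ 1`, `n ≥ 0`: `H_{k+1}(Δ^i S_n) H_{k−1}(Δ^{i+m}S_{n+1})
= H_k(Δ^i S_n) H_k(Δ^{i+m}S_{n+1}) − H_k(Δ^i S_{n+1}) H_k(Δ^{i+m}S_n)`. -/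
theorem stmt_3 (m : ℕ) (hm : 1 ≤ m) (S : ℕ → ℝ) (i k n : ℕ) (hk : 1 ≤ k) :
    Hd m (fd^[i] S) ((k : ℤ) + 1) n * Hd m (fd^[i + m] S) ((k : ℤ) - 1) (n + 1) =
      Hd m (fd^[i] S) (k : ℤ) n * Hd m (fd^[i + m] S) (k : ℤ) (n + 1) -
        Hd m (fd^[i] S) (k : ℤ) (n + 1) * Hd m (fd^[i + m] S) (k : ℤ) n := by
  have giter : ∀ (a b x y : ℕ), a = b → x = y → fd^[a] S x = fd^[b] S y := by
    rintro a b x y rfl rfl; rfl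
  obtain ⟨p, rfl⟩ : ∃ p, k = p + 1 := ⟨k - 1, (Nat.succ_pred_eq_of_pos hk).symm⟩
  rw [show ((p + 1 : ℕ) : ℤ) + 1 = ((p + 2 : ℕ) : ℤ) by push_cast; ring,
    show ((p + 1 : ℕ) : ℤ) - 1 = ((p : ℕ) : ℤ) by push_cast; ring]
  rw [Hd_natCast, Hd_natCast, Hd_natCast, Hd_natCast, Hd_natCast, Hd_natCast]
  set A : Matrix (Fin (p + 2)) (Fin (p + 2)) ℝ :=
    Matrix.of fun r c : Fin (p + 2) => fd^[r.val * m + i] S (n + c.val) with hA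
  have e1 : (Matrix.of fun a b : Fin (p + 2) => fd^[a.val * m] (fd^[i] S) (n + b.val)) = A := by
    ext a b
    simp [hA, ← Function.iterate_add_apply]
  have e2 : (Matrix.of fun a b : Fin p => fd^[a.val * m] (fd^[i + m] S) (n + 1 + b.val)) =
      A.submatrix (fun x : Fin p => x.succ.castSucc) (fun x : Fin p => x.succ.castSucc) := by
    ext a b
    simp only [Matrix.of_apply, Matrix.submatrix_apply, hA, Fin.coe_castSucc, Fin.val_succ,
      ← Function.iterate_add_apply]
    exact giter _ _ _ _ (by ring) (by omega)
  have e3 : (Matrix.of fun a b : Fin (p + 1) => fd^[a.val * m] (fd^[i] S) (n + b.val)) =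
      A.submatrix (Fin.last (p + 1)).succAbove (Fin.last (p + 1)).succAbove := by
    ext a b
    simp only [Matrix.of_apply, Matrix.submatrix_apply, Fin.succAbove_last, hA,
      Fin.coe_castSucc, ← Function.iterate_add_apply]
  have e4 : (Matrix.of fun a b : Fin (p + 1) => fd^[a.val * m] (fd^[i + m] S) (n + 1 + b.val)) =
      A.submatrix (0 : Fin (p + 2)).succAbove (0 : Fin (p + 2)).succAbove := by
    ext a b
    simp only [Matrix.of_apply, Matrix.submatrix_apply, Fin.zero_succAbove, hA, Fin.val_succ,
      ← Function.iterate_add_apply]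
    exact giter _ _ _ _ (by ring) (by omega)
  have e5 : (Matrix.of fun a b : Fin (p + 1) => fd^[a.val * m] (fd^[i] S) (n + 1 + b.val)) =
      A.submatrix (Fin.last (p + 1)).succAbove (0 : Fin (p + 2)).succAbove := by
    ext a b
    simp only [Matrix.of_apply, Matrix.submatrix_apply, Fin.succAbove_last, Fin.zero_succAbove,
      hA, Fin.coe_castSucc, Fin.val_succ, ← Function.iterate_add_apply]
    exact giter _ _ _ _ (by ring) (by omega)
  have e6 : (Matrix.of fun a b : Fin (p + 1) => fd^[a.val * m] (fd^[i + m] S) (n + b.val)) =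
      A.submatrix (0 : Fin (p + 2)).succAbove (Fin.last (p + 1)).succAbove := by
    ext a b
    simp only [Matrix.of_apply, Matrix.submatrix_apply, Fin.succAbove_last, Fin.zero_succAbove,
      hA, Fin.coe_castSucc, Fin.val_succ, ← Function.iterate_add_apply]
    exact giter _ _ _ _ (by ring) (by omega)
  rw [e1, e2, e3, e4, e5, e6]
  exact dj A
end

section
/- For all integers i ≥ 0, k ≥ 0 and n ≥ 0, H_k(Δ^{i+2} S_n)·H_k(Δ^i S_{n+1}) = H_k(Δ^{i+1} S_n)·Φ_{k+1}(Δ^i S_{n+1}) − H_k(Δ^{i+1} S_{n+1})·Φ_{k+1}(Δ^i S_n). -/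
/-- Determinant `Φ_k(u_n)`: the `k × k` determinant whose first row is
`(n, n+1, …, n+k−1)` and whose `i`-th row (`1 ≤ i ≤ k−1`) is
`(Δ^{(i−1)m} u_n, …, Δ^{(i−1)m} u_{n+k−1})`. `Φ_0 = 1` (empty determinant). -/
noncomputable def Phi (m : ℕ) (u : ℕ → ℝ) (k : ℕ) (n : ℕ) : ℝ :=
  Matrix.det (Matrix.of fun i j : Fin k =>
    if i.val = 0 then ((n + j.val : ℕ) : ℝ) else fd^[(i.val - 1) * m] u (n + j.val))

section Aux

open Matrix Finset

variable {R : Type*} [CommRing R]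

/-- One pass of column differencing: if the first row of `X` is all `1`s, then
`det X` equals the determinant of the matrix of first differences of the remaining rows. -/
lemma det_diff {s : ℕ} (X : Matrix (Fin (s+1)) (Fin (s+1)) R) (h : ∀ j, X 0 j = 1) :
    X.det = Matrix.det (Matrix.of fun i j : Fin s =>
      X i.succ j.succ - X i.succ j.castSucc) := by
  -- the unipotent column-operation matrix
  set P : Matrix (Fin (s+1)) (Fin (s+1)) R :=
    Matrix.of (fun a b : Fin (s+1) => (if a = b then 1 else 0) -
      (if a.val + 1 = b.val then 1 else 0)) with hP
  have hPdet : P.det = 1 := by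
    rw [Matrix.det_of_upperTriangular]
    · simp [hP]
    · intro a b hba
      have hv : (b : ℕ) < (a : ℕ) := hba
      have h1 : a ≠ b := by intro h; subst h; exact lt_irrefl _ hv
      have h2 : ¬ ((a : ℕ) + 1 = (b : ℕ)) := by omega
      simp [hP, h1, h2]
  have hXP : ∀ i : Fin (s+1), (X * P) i 0 = X i 0 ∧
      ∀ j : Fin s, (X * P) i j.succ = X i j.succ - X i j.castSucc := by
    intro i
    constructor
    · simp only [Matrix.mul_apply, hP, Matrix.of_apply, mul_sub, mul_ite, mul_one, mul_zero]
      rw [Finset.sum_sub_distrib]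
      simp
    · intro j
      simp only [Matrix.mul_apply, hP, Matrix.of_apply, mul_sub, mul_ite, mul_one, mul_zero]
      rw [Finset.sum_sub_distrib]
      congr 1
      · simp
      · rw [Finset.sum_eq_single j.castSucc]
        · simp
        · intro b _ hb
          rw [if_neg]
          intro hv
          exact hb (by ext; simpa using hv)
        · simp
  have key : X.det = (X * P).det := by rw [Matrix.det_mul, hPdet, mul_one]
  rw [key, Matrix.det_succ_row_zero]
  rw [Finset.sum_eq_single 0]
  · have h00 : (X * P) 0 0 = 1 := by rw [(hXP 0).1, h]
    rw [h00]
    simp only [Fin.val_zero, pow_zero, one_mul, mul_one, Fin.succAbove_zero]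
    congr 1
    ext i j
    simp only [Matrix.submatrix_apply, Matrix.of_apply]
    rw [(hXP i.succ).2 j]
  · intro b _ hb
    obtain ⟨j, rfl⟩ := Fin.exists_succ_eq.2 hb
    rw [(hXP 0).2 j, h, h, sub_self]
    ring
  · simp

lemma det_diag_const {s : ℕ} (d : R) :
    Matrix.det (Matrix.of fun a b : Fin s => if a = b then d else 0) = d ^ s := by
  have : (Matrix.of fun a b : Fin s => if a = b then d else 0) =
      d • (1 : Matrix (Fin s) (Fin s) R) := by
    ext a b
    by_cases h : a = b <;> simp [h, Matrix.one_apply]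
  rw [this, Matrix.det_smul, Matrix.det_one, mul_one, Fintype.card_fin]

/-- A diagonal matrix `d • 1` whose last column has been replaced by `v`. -/
lemma det_diag_lastCol {s : ℕ} (d : R) (v : Fin (s+1) → R) :
    Matrix.det (Matrix.of fun a b : Fin (s+1) =>
      if b = Fin.last s then v a else if a = b then d else 0)
      = d ^ s * v (Fin.last s) := by
  rw [Matrix.det_succ_column _ (Fin.last s)]
  rw [Finset.sum_eq_single (Fin.last s)]
  · have hsub : ((Matrix.of fun a b : Fin (s+1) =>
        if b = Fin.last s then v a else if a = b then d else 0).submatrix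
        Fin.castSucc Fin.castSucc) =
        Matrix.of fun a b : Fin s => if a = b then d else 0 := by
      ext a b
      simp only [Matrix.submatrix_apply, Matrix.of_apply]
      rw [if_neg (Fin.castSucc_lt_last b).ne]
      by_cases h : a = b
      · subst h; simp
      · rw [if_neg (by simpa using h), if_neg h]
    have h1 : (-1 : R) ^ ((Fin.last s : ℕ) + (Fin.last s : ℕ)) = 1 := by
      rw [show (Fin.last s : ℕ) + (Fin.last s : ℕ) = 2 * s by simp [Fin.val_last]; ring,
        pow_mul]
      norm_num
    rw [Fin.succAbove_last, Matrix.of_apply, if_pos rfl, hsub, det_diag_const, h1]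
    ring
  · intro a _ ha
    obtain ⟨a', rfl⟩ := Fin.exists_castSucc_eq.2 ha
    have : Matrix.det ((Matrix.of fun a b : Fin (s+1) =>
        if b = Fin.last s then v a else if a = b then d else 0).submatrix
        a'.castSucc.succAbove (Fin.last s).succAbove) = 0 := by
      apply Matrix.det_eq_zero_of_column_eq_zero a'
      intro q
      simp only [Matrix.submatrix_apply, Matrix.of_apply, Fin.succAbove_last]
      rw [if_neg (Fin.castSucc_lt_last a').ne, if_neg (Fin.succAbove_ne _ q)]
    rw [this]
    ring
  · simp

/-- Subdiagonal `d`s with last column `w`. -/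
lemma det_subdiag_lastCol {s : ℕ} (d : R) (w : Fin (s+1) → R) :
    Matrix.det (Matrix.of fun a b : Fin (s+1) =>
      if b = Fin.last s then w a else if (a : ℕ) = (b : ℕ) + 1 then d else 0)
      = (-1) ^ s * w 0 * d ^ s := by
  rw [Matrix.det_succ_row_zero]
  rw [Finset.sum_eq_single (Fin.last s)]
  · have hsub : ((Matrix.of fun a b : Fin (s+1) =>
        if b = Fin.last s then w a else if (a : ℕ) = (b : ℕ) + 1 then d else 0).submatrix
        Fin.succ Fin.castSucc) = Matrix.of fun a b : Fin s => if a = b then d else 0 := by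
      ext a b
      simp only [Matrix.submatrix_apply, Matrix.of_apply]
      rw [if_neg (Fin.castSucc_lt_last b).ne]
      simp only [Fin.val_succ, Fin.coe_castSucc]
      by_cases h : a = b
      · subst h; simp
      · rw [if_neg (by simpa [Fin.ext_iff] using h), if_neg h]
    rw [Fin.succAbove_last, Matrix.of_apply, if_pos rfl, hsub, det_diag_const, Fin.val_last]
  · intro b _ hb
    rw [Matrix.of_apply, if_neg hb, if_neg (by simp), mul_zero, zero_mul]
  · simp

/-- Desnanot–Jacobi-type identity for rows `{0,1}` and columns `{0, last}`, over a domain,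
for a matrix with nonzero determinant. -/
lemma jacobi_domain {R : Type*} [CommRing R] [IsDomain R] {r : ℕ}
    (M : Matrix (Fin (r+2)) (Fin (r+2)) R) (hd : M.det ≠ 0) :
    M.det * (M.submatrix (fun i : Fin r => i.succ.succ)
        (fun j : Fin r => j.castSucc.succ)).det =
      (M.submatrix Fin.succ Fin.succ).det *
        (M.submatrix (Fin.succAbove 1) Fin.castSucc).det -
      (M.submatrix Fin.succ Fin.castSucc).det *
        (M.submatrix (Fin.succAbove 1) Fin.succ).det := by
  set d : R := M.det with hdd
  set L : Fin (r+2) := Fin.last (r+1) with hL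
  have hL0 : L ≠ 0 := by
    simp [hL, Fin.ext_iff]
  set N : Matrix (Fin (r+2)) (Fin (r+2)) R :=
    (M.updateCol 0 (Pi.single 0 1)).updateCol L (Pi.single 1 1) with hN
  have hNapp : ∀ p q, N p q = if q = 0 then (if p = 0 then 1 else 0)
      else if q = L then (if p = 1 then 1 else 0) else M p q := by
    intro p q
    rcases eq_or_ne q 0 with rfl | hq0
    · rw [hN, Matrix.updateCol_apply, if_neg (Ne.symm hL0), Matrix.updateCol_apply,
        if_pos rfl, Pi.single_apply, if_pos rfl]
    · rcases eq_or_ne q L with rfl | hqL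
      · rw [hN, Matrix.updateCol_apply, if_pos rfl, Pi.single_apply, if_neg hq0,
          if_pos rfl]
      · rw [hN, Matrix.updateCol_apply, if_neg hqL, Matrix.updateCol_apply,
          if_neg hq0, if_neg hq0, if_neg hqL]
  -- Step 1: det N = (-1)^r * det center
  have hdetN : N.det = (-1) ^ r * (M.submatrix (fun i : Fin r => i.succ.succ)
      (fun j : Fin r => j.castSucc.succ)).det := by
    rw [Matrix.det_succ_column_zero, Finset.sum_eq_single 0]
    · rw [hNapp, if_pos rfl, if_pos rfl, Fin.succAbove_zero]
      simp only [Fin.val_zero, pow_zero, one_mul, mul_one]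
      -- now expand the (r+1)-det along its last column
      rw [Matrix.det_succ_column (N.submatrix Fin.succ Fin.succ) (Fin.last r),
        Finset.sum_eq_single 0]
      · have he : (N.submatrix Fin.succ Fin.succ) 0 (Fin.last r) = 1 := by
          rw [Matrix.submatrix_apply, hNapp, if_neg (Fin.succ_ne_zero _),
            if_pos (by rw [hL, Fin.succ_last]), if_pos Fin.succ_zero_eq_one]
        rw [he, Fin.succAbove_zero, Fin.succAbove_last]
        have hc : ((N.submatrix Fin.succ Fin.succ).submatrix Fin.succ Fin.castSucc) =
            M.submatrix (fun i : Fin r => i.succ.succ) (fun j : Fin r => j.castSucc.succ) := by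
          ext a b
          simp only [Matrix.submatrix_apply]
          rw [show (Fin.castSucc b).succ = (b.castSucc.succ) from rfl]
          rw [hNapp, if_neg (Fin.succ_ne_zero _), if_neg]
          rw [hL]
          intro h
          have := congrArg Fin.val h
          simp [Fin.val_succ, Fin.coe_castSucc, Fin.val_last] at this
          omega
        rw [hc]
        simp [Fin.val_last]
      · intro b _ hb
        have : (N.submatrix Fin.succ Fin.succ) b (Fin.last r) = 0 := by
          rw [Matrix.submatrix_apply, hNapp, if_neg (Fin.succ_ne_zero _),
            if_pos (by rw [hL, Fin.succ_last]), if_neg]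
          intro h
          apply hb
          have h' : b.succ = (0 : Fin (r+1)).succ := by simpa [Fin.succ_zero_eq_one] using h
          exact Fin.succ_inj.mp h'
        rw [this, mul_zero, zero_mul]
      · simp
    · intro p _ hp
      rw [hNapp, if_pos rfl, if_neg hp, mul_zero, zero_mul]
    · simp
  set A : Matrix (Fin (r+2)) (Fin (r+2)) R := adjugate M with hA
  -- Step 2: A * N explicitly
  have hAN : A * N = Matrix.of (fun p q : Fin (r+2) =>
      if q = 0 then A p 0 else if q = L then A p 1 else if p = q then d else 0) := by
    ext p q
    rw [Matrix.mul_apply, Matrix.of_apply]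
    rcases eq_or_ne q 0 with rfl | hq0
    · rw [if_pos rfl, Finset.sum_congr rfl (fun c _ => by rw [hNapp, if_pos rfl])]
      simp [mul_ite]
    · rcases eq_or_ne q L with rfl | hqL
      · rw [if_neg hq0, if_pos rfl,
          Finset.sum_congr rfl (fun c _ => by rw [hNapp, if_neg hq0, if_pos rfl])]
        simp [mul_ite]
      · rw [if_neg hq0, if_neg hqL,
          Finset.sum_congr rfl (fun c _ => by rw [hNapp, if_neg hq0, if_neg hqL])]
        have h2 := congrFun (congrFun (Matrix.adjugate_mul M) p) q
        rw [Matrix.mul_apply] at h2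
        rw [← hA] at h2
        rw [h2, Matrix.smul_apply, Matrix.one_apply, ← hdd]
        by_cases hpq : p = q <;> simp [hpq]
  -- Step 3: the determinant of `A * N`
  have hminor0 : ((A * N).submatrix (0 : Fin (r+2)).succAbove Fin.succ).det
      = d ^ r * A L 1 := by
    rw [Fin.succAbove_zero]
    have hsub : (A * N).submatrix Fin.succ Fin.succ = Matrix.of fun a b : Fin (r+1) =>
        if b = Fin.last r then A a.succ 1 else if a = b then d else 0 := by
      ext a b
      rw [Matrix.submatrix_apply, hAN, Matrix.of_apply, Matrix.of_apply,
        if_neg (Fin.succ_ne_zero b)]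
      by_cases hbl : b = Fin.last r
      · subst hbl
        rw [if_pos (by rw [hL, Fin.succ_last]), if_pos rfl]
      · have h1 : b.succ ≠ L := by
          rw [hL, ← Fin.succ_last]
          exact fun h => hbl (Fin.succ_inj.mp h)
        rw [if_neg h1, if_neg hbl]
        by_cases hab : a = b
        · subst hab; simp
        · rw [if_neg (fun h => hab (Fin.succ_inj.mp h)), if_neg hab]
    rw [hsub, det_diag_lastCol, Fin.succ_last, ← hL]
  have hminorL : ((A * N).submatrix L.succAbove Fin.succ).det
      = (-1) ^ r * A 0 1 * d ^ r := by
    rw [hL, Fin.succAbove_last]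
    have hsub : (A * N).submatrix Fin.castSucc Fin.succ = Matrix.of fun a b : Fin (r+1) =>
        if b = Fin.last r then A a.castSucc 1 else if (a : ℕ) = (b : ℕ) + 1 then d else 0 := by
      ext a b
      rw [Matrix.submatrix_apply, hAN, Matrix.of_apply, Matrix.of_apply,
        if_neg (Fin.succ_ne_zero b)]
      by_cases hbl : b = Fin.last r
      · subst hbl
        rw [if_pos (by rw [hL, Fin.succ_last]), if_pos rfl]
      · have h1 : b.succ ≠ L := by
          rw [hL, ← Fin.succ_last]
          exact fun h => hbl (Fin.succ_inj.mp h)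
        rw [if_neg h1, if_neg hbl]
        by_cases hab : (a : ℕ) = (b : ℕ) + 1
        · rw [if_pos (Fin.ext (by simpa using hab)), if_pos hab]
        · rw [if_neg (fun h => hab (by simpa using congrArg Fin.val h)), if_neg hab]
    rw [hsub, det_subdiag_lastCol]
    simp
  have hminorMid : ∀ p : Fin (r+2), p ≠ 0 → p ≠ L →
      ((A * N).submatrix p.succAbove Fin.succ).det = 0 := by
    intro p hp0 hpL
    obtain ⟨p', rfl⟩ := Fin.exists_succ_eq.2 hp0
    apply Matrix.det_eq_zero_of_column_eq_zero p'
    intro a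
    rw [Matrix.submatrix_apply, hAN, Matrix.of_apply,
      if_neg (Fin.succ_ne_zero p'), if_neg hpL, if_neg (Fin.succAbove_ne _ a)]
  have hdetC : (A * N).det = d ^ r * (A 0 0 * A L 1 - A L 0 * A 0 1) := by
    rw [Matrix.det_succ_column_zero]
    have hterm : ∀ p : Fin (r+2),
        (-1 : R) ^ (p : ℕ) * (A * N) p 0 * ((A * N).submatrix p.succAbove Fin.succ).det =
        (if p = 0 then A 0 0 * (d ^ r * A L 1) else 0) +
        (if p = L then (-1 : R) ^ ((r : ℕ) + 1) * A L 0 * ((-1) ^ r * A 0 1 * d ^ r)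
          else 0) := by
      intro p
      rcases eq_or_ne p 0 with rfl | hp0
      · rw [if_pos rfl, if_neg (Ne.symm hL0), hminor0, hAN, Matrix.of_apply, if_pos rfl]
        simp
      · rcases eq_or_ne p L with hpL | hpL
        · rw [hpL, if_neg hL0, if_pos rfl, hminorL, hAN, Matrix.of_apply, if_pos rfl]
          have hLv : (L : ℕ) = r + 1 := by rw [hL]; simp
          rw [hLv]
          ring
        · rw [if_neg hp0, if_neg hpL, hminorMid p hp0 hpL, mul_zero]
          simp
    rw [Finset.sum_congr rfl (fun p _ => hterm p), Finset.sum_add_distrib,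
      Finset.sum_ite_eq' Finset.univ (0 : Fin (r+2)),
      Finset.sum_ite_eq' Finset.univ L]
    simp only [Finset.mem_univ, if_pos]
    have h2 : (-1 : R) ^ (r + 1) * (-1 : R) ^ r = -1 := by
      rw [← pow_add, show r + 1 + r = 2 * r + 1 by ring, pow_succ, pow_mul]
      norm_num
    linear_combination (A L 0 * A 0 1 * d ^ r) * h2
  -- Step 4: combine both computations of det (A * N)
  have hcard : Fintype.card (Fin (r+2)) - 1 = r + 1 := by simp
  have h4 : d ^ (r+1) * ((-1 : R) ^ r * (M.submatrix (fun i : Fin r => i.succ.succ)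
      (fun j : Fin r => j.castSucc.succ)).det) = d ^ r * (A 0 0 * A L 1 - A L 0 * A 0 1) := by
    rw [← hdetN]
    rw [show d ^ (r+1) * N.det = A.det * N.det by rw [hA, Matrix.det_adjugate, hcard, hdd]]
    rw [← Matrix.det_mul, hdetC]
  have h5 : d * ((-1 : R) ^ r * (M.submatrix (fun i : Fin r => i.succ.succ)
      (fun j : Fin r => j.castSucc.succ)).det) = A 0 0 * A L 1 - A L 0 * A 0 1 := by
    apply mul_left_cancel₀ (pow_ne_zero r hd)
    rw [← h4, pow_succ]
    ring
  -- Step 5: express adjugate entries as minors of M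
  have e00 : A 0 0 = (M.submatrix Fin.succ Fin.succ).det := by
    rw [hA, Matrix.adjugate_fin_succ_eq_det_submatrix, Fin.succAbove_zero]
    simp
  have eL1 : A L 1 = (-1 : R) ^ r * (M.submatrix (Fin.succAbove 1) Fin.castSucc).det := by
    rw [hA, Matrix.adjugate_fin_succ_eq_det_submatrix, hL, Fin.succAbove_last]
    have h1 : ((1 : Fin (r+2)) : ℕ) + ((Fin.last (r+1)) : ℕ) = r + 2 := by simp; omega
    have hs : (-1 : R) ^ (r + 2) = (-1 : R) ^ r := by rw [pow_add]; norm_num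
    rw [h1, hs]
  have eL0 : A L 0 = (-1 : R) ^ (r + 1) * (M.submatrix Fin.succ Fin.castSucc).det := by
    rw [hA, Matrix.adjugate_fin_succ_eq_det_submatrix, hL, Fin.succAbove_last,
      Fin.succAbove_zero]
    have : ((0 : Fin (r+2)) : ℕ) + ((Fin.last (r+1)) : ℕ) = r + 1 := by simp
    rw [this]
  have e01 : A 0 1 = -(M.submatrix (Fin.succAbove 1) Fin.succ).det := by
    rw [hA, Matrix.adjugate_fin_succ_eq_det_submatrix, Fin.succAbove_zero]
    have : ((1 : Fin (r+2)) : ℕ) + ((0 : Fin (r+2)) : ℕ) = 1 := by simp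
    rw [this, pow_one]
    ring
  rw [e00, eL1, eL0, e01] at h5
  have ht : (-1 : R) ^ r * (-1 : R) ^ r = 1 := by
    rw [← pow_add, ← two_mul, pow_mul]
    norm_num
  linear_combination ((-1 : R) ^ r) * h5 -
    (d * (M.submatrix (fun i : Fin r => i.succ.succ) (fun j : Fin r => j.castSucc.succ)).det -
      (M.submatrix Fin.succ Fin.succ).det * (M.submatrix (Fin.succAbove 1) Fin.castSucc).det +
      (M.submatrix Fin.succ Fin.castSucc).det * (M.submatrix (Fin.succAbove 1) Fin.succ).det) * ht

/-- The Jacobi-type identity over `ℝ`, without invertibility hypothesis. -/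
lemma jacobi_real {r : ℕ} (M : Matrix (Fin (r+2)) (Fin (r+2)) ℝ) :
    M.det * (M.submatrix (fun i : Fin r => i.succ.succ)
        (fun j : Fin r => j.castSucc.succ)).det =
      (M.submatrix Fin.succ Fin.succ).det *
        (M.submatrix (Fin.succAbove 1) Fin.castSucc).det -
      (M.submatrix Fin.succ Fin.castSucc).det *
        (M.submatrix (Fin.succAbove 1) Fin.succ).det := by
  set Mp : Matrix (Fin (r+2)) (Fin (r+2)) (Polynomial ℝ) := Matrix.charmatrix (-M) with hMp
  have hdet : Mp.det ≠ 0 := (Matrix.charpoly_monic (-M)).ne_zero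
  have h := jacobi_domain Mp hdet
  have hmap : Mp.map (Polynomial.evalRingHom (0 : ℝ)) = M := by
    ext p q
    by_cases hpq : p = q
    · subst hpq
      simp [hMp, Matrix.charmatrix_apply_eq, Matrix.neg_apply]
    · simp [hMp, Matrix.charmatrix_apply_ne _ _ _ hpq, Matrix.neg_apply]
  have h2 := congrArg (Polynomial.evalRingHom (0 : ℝ)) h
  simp only [_root_.map_mul, _root_.map_sub, RingHom.map_det, RingHom.mapMatrix_apply,
    ← Matrix.submatrix_map, hmap] at h2
  exact h2

lemma Hd_eq (m : ℕ) (u : ℕ → ℝ) (k n : ℕ) :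
    Hd m u (k : ℤ) n =
      Matrix.det (Matrix.of fun a b : Fin k => fd^[(a : ℕ) * m] u (n + (b : ℕ))) := by
  have h : ¬ ((k : ℤ) < 0) := by exact_mod_cast Int.not_lt.mpr (Int.natCast_nonneg k)
  rw [Hd, if_neg h]
  rfl

lemma iter_shift (p q : ℕ) (S : ℕ → ℝ) : fd^[p] (fd^[q] S) = fd^[p + q] S :=
  (Function.iterate_add_apply fd p q S).symm

lemma fd1_apply (w : ℕ → ℝ) (t : ℕ) : fd^[1] w t = w (t + 1) - w t := rfl

lemma fd2_apply (w : ℕ → ℝ) (t : ℕ) :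
    fd^[2] w t = w (t + 1 + 1) - w (t + 1) - (w (t + 1) - w t) := by
  show fd (fd w) t = _
  simp [fd]

lemma succAbove_one_zero {k : ℕ} : (1 : Fin (k+2)).succAbove 0 = 0 := by
  rw [Fin.succAbove_of_castSucc_lt]
  · simp
  · simp [Fin.lt_def]

lemma succAbove_one_succ {k : ℕ} (a : Fin k) :
    (1 : Fin (k+2)).succAbove a.succ = a.succ.succ := by
  rw [Fin.succAbove_of_le_castSucc]
  simp [Fin.le_def]


end Aux

/-- For `i, k, n ≥ 0`: `H_k(Δ^{i+2}S_n) H_k(Δ^i S_{n+1})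
= H_k(Δ^{i+1}S_n) Φ_{k+1}(Δ^i S_{n+1}) − H_k(Δ^{i+1}S_{n+1}) Φ_{k+1}(Δ^i S_n)`. -/
theorem stmt_5 (m : ℕ) (hm : 1 ≤ m) (S : ℕ → ℝ) (i k n : ℕ) :
    Hd m (fd^[i + 2] S) (k : ℤ) n * Hd m (fd^[i] S) (k : ℤ) (n + 1) =
      Hd m (fd^[i + 1] S) (k : ℤ) n * Phi m (fd^[i] S) (k + 1) (n + 1) -
        Hd m (fd^[i + 1] S) (k : ℤ) (n + 1) * Phi m (fd^[i] S) (k + 1) n := by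
  set u : ℕ → ℝ := fd^[i] S with hu
  set M : Matrix (Fin (k+2)) (Fin (k+2)) ℝ := Matrix.of (fun a b : Fin (k+2) =>
    if (a : ℕ) = 0 then 1 else if (a : ℕ) = 1 then ((n + (b : ℕ) : ℕ) : ℝ)
    else fd^[((a : ℕ) - 2) * m] u (n + (b : ℕ))) with hM
  have hMrow0 : ∀ b : Fin (k+2), M 0 b = 1 := by
    intro b; rw [hM]; simp
  have hMrow1 : ∀ b : Fin (k+2), ∀ c : Fin (k+2), (c : ℕ) = 1 → M c b = ((n + (b : ℕ) : ℕ) : ℝ) := by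
    intro b c hc; rw [hM, Matrix.of_apply, if_neg (by omega), if_pos hc]
  have hMge2 : ∀ c b : Fin (k+2), 2 ≤ (c : ℕ) →
      M c b = fd^[((c : ℕ) - 2) * m] u (n + (b : ℕ)) := by
    intro c b hc; rw [hM, Matrix.of_apply, if_neg (by omega), if_neg (by omega)]
  -- (A) det M = H_k(Δ^{i+2} S)_n
  have hA : M.det = Hd m (fd^[i+2] S) (k : ℤ) n := by
    rw [det_diff M hMrow0]
    have h2 : ∀ b : Fin (k+1), (Matrix.of fun p q : Fin (k+1) =>
        M p.succ q.succ - M p.succ q.castSucc) 0 b = 1 := by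
      intro b
      rw [Matrix.of_apply, hMrow1 _ _ (by simp), hMrow1 _ _ (by simp)]
      push_cast
      simp
    rw [det_diff _ h2, Hd_eq]
    congr 1
    ext a b
    simp only [Matrix.of_apply]
    rw [hMge2 _ _ (by simp), hMge2 _ _ (by simp), hMge2 _ _ (by simp), hMge2 _ _ (by simp)]
    simp only [Fin.val_succ, Fin.coe_castSucc]
    rw [hu]
    simp only [iter_shift]
    rw [show ((a : ℕ) + 1 + 1 - 2) = (a : ℕ) from by omega,
      show (a : ℕ) * m + (i + 2) = 2 + ((a : ℕ) * m + i) by ring,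
      Function.iterate_add_apply fd 2 ((a : ℕ) * m + i) S, fd2_apply]
    simp only [← add_assoc]
  -- (B) the central minor
  have hB : (M.submatrix (fun a : Fin k => a.succ.succ)
      (fun b : Fin k => b.castSucc.succ)).det = Hd m (fd^[i] S) (k : ℤ) (n + 1) := by
    rw [Hd_eq]
    congr 1
    ext a b
    rw [Matrix.of_apply, Matrix.submatrix_apply, hMge2 _ _ (by simp)]
    simp only [Fin.val_succ, Fin.coe_castSucc]
    rw [hu, show ((a : ℕ) + 1 + 1 - 2) = (a : ℕ) from by omega,
      show n + ((b : ℕ) + 1) = (n + 1) + (b : ℕ) by omega]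
  -- (C) Φ_{k+1}(u_{n+1})
  have hC : (M.submatrix Fin.succ Fin.succ).det = Phi m u (k + 1) (n + 1) := by
    simp only [Phi]
    congr 1
    ext a b
    rw [Matrix.submatrix_apply, Matrix.of_apply]
    by_cases h0 : (a : ℕ) = 0
    · rw [if_pos h0, hMrow1 _ _ (by simp [Fin.ext_iff, h0])]
      congr 1
      simp only [Fin.val_succ]
      omega
    · rw [if_neg h0, hMge2 _ _ (by simp only [Fin.val_succ]; omega)]
      simp only [Fin.val_succ]
      rw [show ((a : ℕ) + 1 - 2) = (a : ℕ) - 1 from by omega,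
        show n + ((b : ℕ) + 1) = (n + 1) + (b : ℕ) by omega]
  -- (D) Φ_{k+1}(u_n)
  have hD : (M.submatrix Fin.succ Fin.castSucc).det = Phi m u (k + 1) n := by
    simp only [Phi]
    congr 1
    ext a b
    rw [Matrix.submatrix_apply, Matrix.of_apply]
    by_cases h0 : (a : ℕ) = 0
    · rw [if_pos h0, hMrow1 _ _ (by simp [Fin.ext_iff, h0])]
      simp
    · rw [if_neg h0, hMge2 _ _ (by simp only [Fin.val_succ]; omega)]
      simp only [Fin.val_succ, Fin.coe_castSucc]
      rw [show ((a : ℕ) + 1 - 2) = (a : ℕ) - 1 from by omega]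
  -- (E) H_k(Δ^{i+1}S)_n
  have hE : (M.submatrix (Fin.succAbove 1) Fin.castSucc).det
      = Hd m (fd^[i+1] S) (k : ℤ) n := by
    have hrow0 : ∀ b : Fin (k+1),
        (M.submatrix ((1 : Fin (k+2)).succAbove) Fin.castSucc) 0 b = 1 := by
      intro b
      rw [Matrix.submatrix_apply, succAbove_one_zero, hMrow0]
    rw [det_diff _ hrow0, Hd_eq]
    congr 1
    ext a b
    simp only [Matrix.of_apply, Matrix.submatrix_apply]
    rw [succAbove_one_succ, hMge2 _ _ (by simp), hMge2 _ _ (by simp)]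
    simp only [Fin.val_succ, Fin.coe_castSucc]
    rw [hu]
    simp only [iter_shift]
    rw [show ((a : ℕ) + 1 + 1 - 2) = (a : ℕ) from by omega,
      show (a : ℕ) * m + (i + 1) = 1 + ((a : ℕ) * m + i) by ring,
      Function.iterate_add_apply fd 1 ((a : ℕ) * m + i) S, fd1_apply]
    simp only [← add_assoc]
  -- (F) H_k(Δ^{i+1}S)_{n+1}
  have hF : (M.submatrix (Fin.succAbove 1) Fin.succ).det
      = Hd m (fd^[i+1] S) (k : ℤ) (n + 1) := by
    have hrow0 : ∀ b : Fin (k+1),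
        (M.submatrix ((1 : Fin (k+2)).succAbove) Fin.succ) 0 b = 1 := by
      intro b
      rw [Matrix.submatrix_apply, succAbove_one_zero, hMrow0]
    rw [det_diff _ hrow0, Hd_eq]
    congr 1
    ext a b
    simp only [Matrix.of_apply, Matrix.submatrix_apply]
    rw [succAbove_one_succ, hMge2 _ _ (by simp), hMge2 _ _ (by simp)]
    simp only [Fin.val_succ, Fin.coe_castSucc]
    rw [hu]
    simp only [iter_shift]
    rw [show ((a : ℕ) + 1 + 1 - 2) = (a : ℕ) from by omega,
      show (a : ℕ) * m + (i + 1) = 1 + ((a : ℕ) * m + i) by ring,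
      Function.iterate_add_apply fd 1 ((a : ℕ) * m + i) S, fd1_apply,
      show n + ((b : ℕ) + 1 + 1) = (n + 1) + (b : ℕ) + 1 by omega,
      show n + ((b : ℕ) + 1) = (n + 1) + (b : ℕ) by omega]
  have key := jacobi_real M
  rw [hA, hB, hC, hD, hE, hF] at key
  linear_combination key
end
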